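/- arXiv:1201.4677 — 5 statements merged into one kernel-verified Lean document; each statement's English description precedes it below -/
import Mathlib

section
/- Let W be a wedge in ℝ^m, L = W ∩ (−W), and K = L^⊥ ∩ W. For every x ∈ ℝ^m, writing x = x_k + x_l with x_k ∈ L^⊥ and x_l ∈ L (the orthogonal decomposition of x), the metric projection of x onto W satisfies P_W x = P_K x_k + x_l, where P_K denotes the metric projection onto K. -/
open scoped RealInnerProductSpace Pointwise

set_option maxHeartbeats 1000000

/-- For a wedge `W` in `ℝ^m`, `L = W ∩ (-W)`, `K = L^⊥ ∩ W`,
and `x = x_k + x_l` the orthogonal decomposition of `x` with `x_k ∈ L^⊥`,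
`x_l ∈ L`, the metric projection onto `W` satisfies `P_W x = P_K x_k + x_l`. -/
theorem proj_wedge_eq_proj_cone_add (m : ℕ)
    (W : Set (EuclideanSpace ℝ (Fin m)))
    (hWne : W.Nonempty) (hWcl : IsClosed W)
    (hWadd : ∀ x ∈ W, ∀ y ∈ W, x + y ∈ W)
    (hWsmul : ∀ t : ℝ, 0 ≤ t → ∀ x ∈ W, t • x ∈ W)
    (L : Set (EuclideanSpace ℝ (Fin m))) (hL : L = W ∩ (-W))
    (Lperp : Set (EuclideanSpace ℝ (Fin m)))
    (hLperp : Lperp = {y | ∀ x ∈ L, ⟪x, y⟫ = 0})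
    (K : Set (EuclideanSpace ℝ (Fin m))) (hK : K = Lperp ∩ W)
    (PW : EuclideanSpace ℝ (Fin m) → EuclideanSpace ℝ (Fin m))
    (hPW : ∀ x, PW x ∈ W ∧ ∀ y ∈ W, ‖x - PW x‖ ≤ ‖x - y‖)
    (PK : EuclideanSpace ℝ (Fin m) → EuclideanSpace ℝ (Fin m))
    (hPK : ∀ x ∈ Lperp, PK x ∈ K ∧ ∀ y ∈ K, ‖x - PK x‖ ≤ ‖x - y‖)
    (x xk xl : EuclideanSpace ℝ (Fin m))
    (hxk : xk ∈ Lperp) (hxl : xl ∈ L) (hx : x = xk + xl) :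
    PW x = PK xk + xl := by
  obtain ⟨w0, hw0⟩ := hWne
  -- `L` is a linear subspace
  have hLsub : ∀ a ∈ L, ∀ b ∈ L, a + b ∈ L := by
    intro a ha b hb
    rw [hL] at ha hb ⊢
    refine ⟨hWadd a ha.1 b hb.1, ?_⟩
    have := hWadd (-a) ha.2 (-b) hb.2
    simpa [Set.mem_neg, neg_add, add_comm] using this
  have hLneg : ∀ a ∈ L, -a ∈ L := by
    intro a ha
    rw [hL] at ha ⊢
    exact ⟨ha.2, by simpa [Set.mem_neg] using ha.1⟩
  have hzeroW : (0 : EuclideanSpace ℝ (Fin m)) ∈ W := by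
    simpa using hWsmul 0 le_rfl w0 hw0
  have hLsmul : ∀ t : ℝ, ∀ a ∈ L, t • a ∈ L := by
    intro t a ha
    rcases le_or_gt 0 t with ht | ht
    · rw [hL] at ha ⊢
      refine ⟨hWsmul t ht a ha.1, ?_⟩
      have := hWsmul t ht (-a) ha.2
      simpa [Set.mem_neg, smul_neg] using this
    · have hna := hLneg a ha
      have h : (-t) • (-a) ∈ L := by
        rw [hL] at hna ⊢
        constructor
        · exact hWsmul (-t) (by linarith) (-a) hna.1
        · have := hWsmul (-t) (by linarith) (- -a) hna.2
          simpa [Set.mem_neg, smul_neg] using this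
      simpa [neg_smul_neg] using h
  have hzeroL : (0 : EuclideanSpace ℝ (Fin m)) ∈ L := by
    rw [hL]; exact ⟨hzeroW, by simpa [Set.mem_neg] using hzeroW⟩
  -- package L as a submodule
  let L' : Submodule ℝ (EuclideanSpace ℝ (Fin m)) :=
    { carrier := L
      add_mem' := fun ha hb => hLsub _ ha _ hb
      zero_mem' := hzeroL
      smul_mem' := fun t a ha => hLsmul t a ha }
  have hLperp_eq : Lperp = (L'ᗮ : Set (EuclideanSpace ℝ (Fin m))) := by
    ext y
    simp only [hLperp, Set.mem_setOf_eq, SetLike.mem_coe, Submodule.mem_orthogonal]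
    rfl
  -- Lperp is closed under subtraction
  have hLperp_sub : ∀ a ∈ Lperp, ∀ b ∈ Lperp, a - b ∈ Lperp := by
    intro a ha b hb
    rw [hLperp_eq] at ha hb ⊢
    exact sub_mem ha hb
  set z := PK xk + xl with hz
  have hPKxk := hPK xk hxk
  have hPKxkK : PK xk ∈ K := hPKxk.1
  have hPKxkW : PK xk ∈ W := by rw [hK] at hPKxkK; exact hPKxkK.2
  have hPKxkLp : PK xk ∈ Lperp := by rw [hK] at hPKxkK; exact hPKxkK.1
  have hzW : z ∈ W := hWadd _ hPKxkW _ (by rw [hL] at hxl; exact hxl.1)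
  -- key: z minimizes distance to x over W
  have hmin : ∀ y ∈ W, ‖x - z‖ ≤ ‖x - y‖ := by
    intro y hy
    -- decompose y
    set yl : EuclideanSpace ℝ (Fin m) := ((Submodule.orthogonalProjectionOnto L' y : L') : EuclideanSpace ℝ (Fin m)) with hyl
    set yk : EuclideanSpace ℝ (Fin m) := y - yl with hyk
    have hylL : yl ∈ L := (Submodule.orthogonalProjectionOnto L' y).2
    have hykLp : yk ∈ Lperp := by
      rw [hLperp_eq]
      exact Submodule.sub_starProjection_mem_orthogonal (K := L') y
    have hykW : yk ∈ W := by
      have hnyl : -yl ∈ L := hLneg _ hylL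
      have : y + (-yl) ∈ W := hWadd y hy (-yl) (by rw [hL] at hnyl; exact hnyl.1)
      simpa [hyk, sub_eq_add_neg] using this
    have hykK : yk ∈ K := by rw [hK]; exact ⟨hykLp, hykW⟩
    -- x - z = xk - PK xk
    have hxz : x - z = xk - PK xk := by
      rw [hx, hz]; abel
    have h1 : ‖xk - PK xk‖ ≤ ‖xk - yk‖ := hPKxk.2 yk hykK
    -- Pythagoras: ‖x - y‖² = ‖xk - yk‖² + ‖xl - yl‖²
    have hdecomp : x - y = (xk - yk) + (xl - yl) := by
      rw [hx, hyk]; abel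
    have horth : ⟪xl - yl, xk - yk⟫ = 0 := by
      have hmem : xl - yl ∈ L := by
        have := hLsub xl hxl (-yl) (hLneg _ hylL)
        simpa [sub_eq_add_neg] using this
      have := hLperp_sub xk hxk yk hykLp
      rw [hLperp] at this
      have h' : ⟪xl - yl, xk - yk⟫ = 0 := by
        have := this (xl - yl) hmem
        -- `this : ⟪xl - yl, xk - yk⟫ = 0`? note order
        exact this
      exact h'
    have hpyth : ‖x - y‖ ^ 2 = ‖xk - yk‖ ^ 2 + ‖xl - yl‖ ^ 2 := by
      rw [hdecomp, add_comm (xk - yk)]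
      have := norm_add_sq_real (xl - yl) (xk - yk)
      rw [horth] at this
      linarith
    have h2 : ‖x - z‖ ^ 2 ≤ ‖x - y‖ ^ 2 := by
      rw [hxz, hpyth]
      nlinarith [norm_nonneg (xk - PK xk), norm_nonneg (xk - yk), sq_nonneg ‖xl - yl‖]
    nlinarith [norm_nonneg (x - z), norm_nonneg (x - y)]
  -- uniqueness of the minimizer via the parallelogram law
  have hPWx := hPW x
  have hd1 : ‖x - PW x‖ ≤ ‖x - z‖ := hPWx.2 z hzW
  have hd2 : ‖x - z‖ ≤ ‖x - PW x‖ := hmin (PW x) hPWx.1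
  have hdeq : ‖x - PW x‖ = ‖x - z‖ := le_antisymm hd1 hd2
  set w : EuclideanSpace ℝ (Fin m) := (2 : ℝ)⁻¹ • (PW x + z) with hw
  have hwW : w ∈ W := hWsmul _ (by norm_num) _ (hWadd _ hPWx.1 _ hzW)
  have hwge : ‖x - PW x‖ ≤ ‖x - w‖ := hPWx.2 w hwW
  have hpar := parallelogram_law_with_norm ℝ (x - PW x) (x - z)
  have he1 : (x - PW x) + (x - z) = (2 : ℝ) • (x - w) := by
    rw [hw]; rw [smul_sub, smul_smul]
    norm_num
    module
  have he2 : (x - PW x) - (x - z) = z - PW x := by abel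
  have hn1 : ‖(2 : ℝ) • (x - w)‖ = 2 * ‖x - w‖ := by
    rw [norm_smul]; simp
  have hsq : ‖x - PW x‖ * ‖x - PW x‖ ≤ ‖x - w‖ * ‖x - w‖ :=
    mul_self_le_mul_self (norm_nonneg _) hwge
  have hn2 : ‖z - PW x‖ = 0 := by
    rw [he1, he2, hn1] at hpar
    have hdsq : ‖x - PW x‖ * ‖x - PW x‖ = ‖x - z‖ * ‖x - z‖ := by rw [hdeq]
    have hle : ‖z - PW x‖ * ‖z - PW x‖ ≤ 0 := by linarith [hsq, hpar, hdsq]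
    have hge : 0 ≤ ‖z - PW x‖ * ‖z - PW x‖ := mul_self_nonneg _
    exact mul_self_eq_zero.mp (le_antisymm hle hge)
  have : z - PW x = 0 := norm_eq_zero.mp hn2
  have : PW x = z := by
    have := sub_eq_zero.mp this
    exact this.symm
  rw [this]
end

section
/- Let W be a wedge in ℝ^m with L = W ∩ (−W) and K = L^⊥ ∩ W. Then the metric projection P_W is W-isotone (i.e., v − u ∈ W implies P_W v − P_W u ∈ W for all u, v ∈ ℝ^m) if and only if the metric projection P_K is K-isotone (i.e., v − u ∈ K implies P_K v − P_K u ∈ K for all u, v ∈ L^⊥). -/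
open scoped RealInnerProductSpace Pointwise

/-- Uniqueness of the metric projection onto a convex set. -/
lemma proj_unique_aux {E : Type*} [NormedAddCommGroup E] [InnerProductSpace ℝ E]
    {S : Set E} (hconv : Convex ℝ S) {x p q : E} (hp : p ∈ S) (hq : q ∈ S)
    (hpm : ∀ y ∈ S, ‖x - p‖ ≤ ‖x - y‖) (hqm : ∀ y ∈ S, ‖x - q‖ ≤ ‖x - y‖) :
    p = q := by
  have hmid : (1/2 : ℝ) • p + (1/2 : ℝ) • q ∈ S :=
    hconv hp hq (by norm_num) (by norm_num) (by norm_num)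
  have h1 : ‖x - p‖ ≤ ‖x - ((1/2 : ℝ) • p + (1/2 : ℝ) • q)‖ := hpm _ hmid
  have h2 : ‖x - q‖ ≤ ‖x - ((1/2 : ℝ) • p + (1/2 : ℝ) • q)‖ := hqm _ hmid
  have key : x - ((1/2 : ℝ) • p + (1/2 : ℝ) • q) = (1/2 : ℝ) • ((x - p) + (x - q)) := by
    module
  have hpar := parallelogram_law_with_norm ℝ (x - p) (x - q)
  have hsub : (x - p) - (x - q) = q - p := by abel
  rw [hsub] at hpar
  rw [key, norm_smul] at h1 h2
  simp only [Real.norm_eq_abs] at h1 h2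
  have habs : |(1/2 : ℝ)| = 1/2 := by norm_num
  rw [habs] at h1 h2
  have hqp : ‖q - p‖ = 0 := by
    nlinarith [norm_nonneg (q - p), norm_nonneg (x - p), norm_nonneg (x - q),
      norm_nonneg ((x - p) + (x - q)), sq_nonneg (‖x - p‖ - ‖x - q‖)]
  have h0 := norm_eq_zero.mp hqp
  have := sub_eq_zero.mp h0
  exact this.symm

/-- For a wedge `W` in `ℝ^m`, `L = W ∩ (-W)`, `K = L^⊥ ∩ W`:
the metric projection `P_W` is `W`-isotone if and only if the metric
projection `P_K` (onto `K`, within `L^⊥`) is `K`-isotone. -/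
theorem isotone_wedge_iff_isotone_cone (m : ℕ)
    (W : Set (EuclideanSpace ℝ (Fin m)))
    (hWne : W.Nonempty) (hWcl : IsClosed W)
    (hWadd : ∀ x ∈ W, ∀ y ∈ W, x + y ∈ W)
    (hWsmul : ∀ t : ℝ, 0 ≤ t → ∀ x ∈ W, t • x ∈ W)
    (L : Set (EuclideanSpace ℝ (Fin m))) (hL : L = W ∩ (-W))
    (Lperp : Set (EuclideanSpace ℝ (Fin m)))
    (hLperp : Lperp = {y | ∀ x ∈ L, ⟪x, y⟫ = 0})
    (K : Set (EuclideanSpace ℝ (Fin m))) (hK : K = Lperp ∩ W)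
    (PW : EuclideanSpace ℝ (Fin m) → EuclideanSpace ℝ (Fin m))
    (hPW : ∀ x, PW x ∈ W ∧ ∀ y ∈ W, ‖x - PW x‖ ≤ ‖x - y‖)
    (PK : EuclideanSpace ℝ (Fin m) → EuclideanSpace ℝ (Fin m))
    (hPK : ∀ x ∈ Lperp, PK x ∈ K ∧ ∀ y ∈ K, ‖x - PK x‖ ≤ ‖x - y‖) :
    (∀ u v : EuclideanSpace ℝ (Fin m), v - u ∈ W → PW v - PW u ∈ W) ↔
    (∀ u ∈ Lperp, ∀ v ∈ Lperp, v - u ∈ K → PK v - PK u ∈ K) := by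
  have hE : True := trivial
  -- Basic facts about W
  obtain ⟨w0, hw0⟩ := hWne
  have hW0 : (0 : EuclideanSpace ℝ (Fin m)) ∈ W := by
    have := hWsmul 0 le_rfl w0 hw0
    simpa using this
  have hWconv : Convex ℝ W := by
    intro x hx y hy a b ha hb hab
    exact hWadd _ (hWsmul a ha x hx) _ (hWsmul b hb y hy)
  -- L is a closed linear subspace
  have hLsubW : L ⊆ W := by rw [hL]; exact Set.inter_subset_left
  have hLneg : ∀ x ∈ L, -x ∈ L := by
    rw [hL]; rintro x ⟨h1, h2⟩
    exact ⟨by simpa using h2, by simpa using h1⟩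
  have hLadd : ∀ x ∈ L, ∀ y ∈ L, x + y ∈ L := by
    rw [hL]; rintro x ⟨hx1, hx2⟩ y ⟨hy1, hy2⟩
    refine ⟨hWadd _ hx1 _ hy1, ?_⟩
    simp only [Set.mem_neg] at hx2 hy2 ⊢
    have h12 := hWadd _ hx2 _ hy2
    have heq : -x + -y = -(x + y) := by abel
    rw [heq] at h12
    exact h12
  have hL0 : (0 : EuclideanSpace ℝ (Fin m)) ∈ L := by
    rw [hL]; exact ⟨hW0, by simpa using hW0⟩
  have hLsmul : ∀ t : ℝ, ∀ x ∈ L, t • x ∈ L := by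
    intro t x hx
    rcases le_or_gt 0 t with ht | ht
    · rw [hL] at hx ⊢
      obtain ⟨h1, h2⟩ := hx
      refine ⟨hWsmul t ht x h1, ?_⟩
      simp only [Set.mem_neg] at h2 ⊢
      have := hWsmul t ht _ h2
      simpa [smul_neg] using this
    · have h1 : (-t) • (-x) = t • x := by module
      have h2 : -x ∈ L := hLneg x hx
      rw [hL] at h2 ⊢
      obtain ⟨h21, h22⟩ := h2
      refine ⟨by rw [← h1]; exact hWsmul (-t) (by linarith) _ h21, ?_⟩
      simp only [Set.mem_neg] at h22 ⊢
      rw [← h1]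
      have := hWsmul (-t) (by linarith) _ h22
      simpa [smul_neg] using this
  let Lsub : Submodule ℝ (EuclideanSpace ℝ (Fin m)) :=
    { carrier := L
      add_mem' := fun {x y} hx hy => hLadd x hx y hy
      zero_mem' := hL0
      smul_mem' := fun t x hx => hLsmul t x hx }
  have hLmem : ∀ x : EuclideanSpace ℝ (Fin m), x ∈ Lsub ↔ x ∈ L := fun _ => Iff.rfl
  -- Lperp is the orthogonal complement
  have hLperpIff : ∀ y : EuclideanSpace ℝ (Fin m), y ∈ Lperp ↔ y ∈ Lsubᗮ := by
    intro y
    rw [hLperp, Submodule.mem_orthogonal]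
    rfl
  -- projections
  set pL : EuclideanSpace ℝ (Fin m) → EuclideanSpace ℝ (Fin m) := fun x => (Submodule.orthogonalProjectionOnto Lsub x : EuclideanSpace ℝ (Fin m)) with hpL
  set pP : EuclideanSpace ℝ (Fin m) → EuclideanSpace ℝ (Fin m) := fun x => x - pL x with hpP
  have hpLmem : ∀ x, pL x ∈ L := fun x => (Submodule.orthogonalProjectionOnto Lsub x).2
  have hpPmem : ∀ x, pP x ∈ Lperp := by
    intro x
    rw [hLperpIff]
    exact Submodule.sub_starProjection_mem_orthogonal (K := Lsub) x
  have hLperpSub : ∀ y ∈ Lperp, ∀ z ∈ Lperp, y - z ∈ Lperp := by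
    intro y hy z hz
    rw [hLperpIff] at hy hz ⊢
    exact Submodule.sub_mem _ hy hz
  -- Pythagoras
  have hpyth : ∀ a ∈ L, ∀ b ∈ Lperp, ‖a + b‖ ^ 2 = ‖a‖ ^ 2 + ‖b‖ ^ 2 := by
    intro a ha b hb
    have : ⟪a, b⟫ = 0 := by rw [hLperp] at hb; exact hb a ha
    rw [norm_add_sq_real, this]; ring
  -- decomposition of elements of W
  have hdecomp : ∀ w ∈ W, pL w ∈ L ∧ pP w ∈ K := by
    intro w hw
    refine ⟨hpLmem w, ?_⟩
    rw [hK]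
    refine ⟨hpPmem w, ?_⟩
    have : pP w = w + (-(pL w)) := by rw [hpP]; abel
    rw [this]
    exact hWadd _ hw _ (hLsubW (hLneg _ (hpLmem w)))
  have hKsubW : K ⊆ W := by rw [hK]; exact Set.inter_subset_right
  have hKsubLperp : K ⊆ Lperp := by rw [hK]; exact Set.inter_subset_left
  -- Key: PW x = pL x + PK (pP x)
  have hsplit : ∀ x : EuclideanSpace ℝ (Fin m), PW x = pL x + PK (pP x) := by
    intro x
    obtain ⟨hPKmem, hPKmin⟩ := hPK (pP x) (hpPmem x)
    have hcW : pL x + PK (pP x) ∈ W :=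
      hWadd _ (hLsubW (hpLmem x)) _ (hKsubW hPKmem)
    refine proj_unique_aux hWconv (hPW x).1 hcW (hPW x).2 ?_
    intro y hy
    obtain ⟨hyL, hyK⟩ := hdecomp y hy
    have hxeq : x - y = (pL x - pL y) + (pP x - pP y) := by
      simp only [hpP]; abel
    have hceq : x - (pL x + PK (pP x)) = pP x - PK (pP x) := by
      simp only [hpP]; abel
    have hmemL : pL x - pL y ∈ L := by
      have := hLadd _ (hpLmem x) _ (hLneg _ (hpLmem y))
      simpa [sub_eq_add_neg] using this
    have hmemP : pP x - pP y ∈ Lperp := hLperpSub _ (hpPmem x) _ (hpPmem y)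
    have h1 : ‖x - y‖ ^ 2 = ‖pL x - pL y‖ ^ 2 + ‖pP x - pP y‖ ^ 2 := by
      rw [hxeq]; exact hpyth _ hmemL _ hmemP
    have h2 : ‖pP x - PK (pP x)‖ ≤ ‖pP x - pP y‖ := hPKmin _ hyK
    rw [hceq]
    have h3 : ‖pP x - PK (pP x)‖ ^ 2 ≤ ‖x - y‖ ^ 2 := by
      nlinarith [norm_nonneg (pL x - pL y), norm_nonneg (pP x - pP y),
        norm_nonneg (pP x - PK (pP x))]
    nlinarith [norm_nonneg (pP x - PK (pP x)), norm_nonneg (x - y), h3]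
  -- pL x = 0 for x ∈ Lperp
  have hpLzero : ∀ x ∈ Lperp, pL x = 0 := by
    intro x hx
    rw [hLperpIff] at hx
    apply Submodule.eq_starProjection_of_mem_of_inner_eq_zero (Submodule.zero_mem _)
    intro w hw
    have h0 := (Submodule.mem_orthogonal Lsub x).mp hx w hw
    rw [sub_zero, real_inner_comm]
    exact h0
  have hPWeqPK : ∀ x ∈ Lperp, PW x = PK x := by
    intro x hx
    rw [hsplit x, hpLzero x hx]
    have : pP x = x := by
      show x - pL x = x
      rw [hpLzero x hx]; simp
    rw [this, zero_add]
  -- pL is additive over subtraction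
  have hpLsub : ∀ u v : EuclideanSpace ℝ (Fin m), pL v - pL u = pL (v - u) := by
    intro u v
    simp only [hpL]
    rw [map_sub]
    simp
  constructor
  · -- W-isotone → K-isotone
    intro h u hu v hv huv
    have hW : v - u ∈ W := hKsubW huv
    have := h u v hW
    rw [hPWeqPK u hu, hPWeqPK v hv] at this
    rw [hK]
    refine ⟨?_, this⟩
    exact hLperpSub _ (hKsubLperp ((hPK v hv).1)) _ (hKsubLperp ((hPK u hu).1))
  · -- K-isotone → W-isotone
    intro h u v huv
    obtain ⟨hdL, hdK⟩ := hdecomp (v - u) huv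
    have hpPsub : pP v - pP u = pP (v - u) := by
      simp only [hpP]
      rw [← hpLsub u v]
      abel
    have hKiso : PK (pP v) - PK (pP u) ∈ K := by
      apply h (pP u) (hpPmem u) (pP v) (hpPmem v)
      rw [hpPsub]
      exact hdK
    rw [hsplit u, hsplit v]
    have heq : pL v + PK (pP v) - (pL u + PK (pP u))
        = (pL v - pL u) + (PK (pP v) - PK (pP u)) := by abel
    rw [heq]
    apply hWadd
    · rw [hpLsub u v]; exact hLsubW hdL
    · exact hKsubW hKiso
end

section
/- Let W be a generating wedge in ℝ^m (i.e., W − W = ℝ^m). Then the metric projection P_W is W-isotone (i.e., v − u ∈ W implies P_W v − P_W u ∈ W) if and only if the polar W^⊥ is generated by a family of linearly independent vectors u_1, …, u_k having mutually non-acute angles, i.e., W^⊥ = {t^1 u_1 + ⋯ + t^k u_k : t^i ≥ 0} with u_1, …, u_k linearly independent and ⟨u_i, u_j⟩ ≤ 0 for all i ≠ j. -/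
open scoped RealInnerProductSpace Pointwise

namespace IsotonePolarAux


variable {E : Type} [NormedAddCommGroup E] [InnerProductSpace ℝ E]

/-- The (nonpositive) polar of a set. -/
def pol (W : Set E) : Set E := {y | ∀ x ∈ W, ⟪x, y⟫ ≤ 0}

lemma pol_add {W : Set E} {y z : E} (hy : y ∈ pol W) (hz : z ∈ pol W) :
    y + z ∈ pol W := fun x hx => by
  have := add_nonpos (hy x hx) (hz x hx)
  simpa [inner_add_right] using this

lemma pol_smul {W : Set E} {y : E} {t : ℝ} (ht : 0 ≤ t) (hy : y ∈ pol W) :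
    t • y ∈ pol W := fun x hx => by
  have := mul_nonpos_of_nonneg_of_nonpos ht (hy x hx)
  simpa [real_inner_smul_right] using this

lemma isClosed_pol (W : Set E) : IsClosed (pol W) := by
  have : pol W = ⋂ (x : W), {y : E | ⟪(x : E), y⟫ ≤ 0} := by
    ext y; simp [pol, Set.mem_iInter]
  rw [this]
  exact isClosed_iInter fun x =>
    isClosed_le (Continuous.inner continuous_const continuous_id) continuous_const

section Proj

variable {W : Set E} {PW : E → E}

lemma zero_mem (hWne : W.Nonempty)
    (hWsmul : ∀ t : ℝ, 0 ≤ t → ∀ x ∈ W, t • x ∈ W) : (0 : E) ∈ W := by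
  obtain ⟨w, hw⟩ := hWne
  simpa using hWsmul 0 le_rfl w hw

/-- variational characterization part 1 -/
lemma proj_char (hWadd : ∀ x ∈ W, ∀ y ∈ W, x + y ∈ W)
    (hWsmul : ∀ t : ℝ, 0 ≤ t → ∀ x ∈ W, t • x ∈ W)
    (hWne : W.Nonempty)
    (hPW : ∀ x, PW x ∈ W ∧ ∀ y ∈ W, ‖x - PW x‖ ≤ ‖x - y‖) (x : E) :
    (x - PW x) ∈ pol W ∧ ⟪x - PW x, PW x⟫ = 0 := by
  set p := PW x with hp
  have hpW : p ∈ W := (hPW x).1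
  have key : ∀ q ∈ W, ⟪x - p, q - p⟫ ≤ 0 := by
    intro q hq
    by_contra hc
    push_neg at hc
    have hqp : q - p ≠ 0 := by
      intro h
      rw [h] at hc; simp at hc
    have hn : (0:ℝ) < ‖q - p‖^2 := by have := norm_pos_iff.mpr hqp; positivity
    set c := ⟪x - p, q - p⟫ with hcdef
    set t := min 1 (c / ‖q - p‖^2) with htdef
    have ht0 : 0 < t := lt_min one_pos (div_pos hc hn)
    have ht1 : t ≤ 1 := min_le_left _ _
    have htc : t * ‖q - p‖^2 ≤ c := by
      calc t * ‖q - p‖^2 ≤ (c / ‖q - p‖^2) * ‖q - p‖^2 := by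
            apply mul_le_mul_of_nonneg_right (min_le_right _ _) (le_of_lt hn)
        _ = c := by field_simp
    have hzW : p + t • (q - p) ∈ W := by
      have h1 : (1 - t) • p ∈ W := hWsmul _ (by linarith) _ hpW
      have h2 : t • q ∈ W := hWsmul _ (le_of_lt ht0) _ hq
      have := hWadd _ h1 _ h2
      have heq : (1 - t) • p + t • q = p + t • (q - p) := by
        rw [sub_smul, smul_sub, one_smul]; abel
      rwa [heq] at this
    have hmin := (hPW x).2 _ hzW
    rw [← hp] at hmin
    have hexp : ‖x - (p + t • (q - p))‖^2
        = ‖x - p‖^2 - 2 * t * c + t^2 * ‖q - p‖^2 := by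
      have : x - (p + t • (q - p)) = (x - p) - t • (q - p) := by abel
      rw [this, norm_sub_sq_real, real_inner_smul_right, norm_smul]
      simp [hcdef, mul_pow, abs_of_nonneg (le_of_lt ht0)]
      ring
    have hlt : ‖x - (p + t • (q - p))‖^2 < ‖x - p‖^2 := by
      rw [hexp]
      have h2 : t^2 * ‖q - p‖^2 ≤ t * c := by
        have := mul_le_mul_of_nonneg_left htc (le_of_lt ht0)
        calc t^2 * ‖q-p‖^2 = t * (t * ‖q-p‖^2) := by ring
          _ ≤ t * c := this
      nlinarith
    have := pow_le_pow_left₀ (norm_nonneg _) hmin 2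
    nlinarith
  have h0 : (0 : E) ∈ W := zero_mem hWne hWsmul
  have h2p : (2:ℝ) • p ∈ W := hWsmul 2 (by norm_num) _ hpW
  have e1 : ⟪x - p, (0:E) - p⟫ ≤ 0 := key 0 h0
  have e2 : ⟪x - p, (2:ℝ) • p - p⟫ ≤ 0 := key _ h2p
  have hxp : ⟪x - p, p⟫ = 0 := by
    have h1 : 0 ≤ ⟪x - p, p⟫ := by
      have : ⟪x - p, (0:E) - p⟫ = -⟪x - p, p⟫ := by
        rw [zero_sub, inner_neg_right]
      linarith [e1, this.symm.le, this.le]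
    have h2 : ⟪x - p, p⟫ ≤ 0 := by
      have : (2:ℝ) • p - p = p := by
        rw [two_smul]; abel
      rwa [this] at e2
    linarith
  refine ⟨fun q hq => ?_, hxp⟩
  have := key q hq
  have hsplit : ⟪x - p, q - p⟫ = ⟪x - p, q⟫ - ⟪x - p, p⟫ := by
    rw [inner_sub_right]
  rw [hsplit, hxp, sub_zero] at this
  rw [real_inner_comm]
  exact this

lemma proj_unique
    (hPW : ∀ x, PW x ∈ W ∧ ∀ y ∈ W, ‖x - PW x‖ ≤ ‖x - y‖) {x p : E}
    (hpW : p ∈ W) (hxp : x - p ∈ pol W) (ho : ⟪x - p, p⟫ = 0) : PW x = p := by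
  set r := PW x with hr
  have hrW : r ∈ W := (hPW x).1
  have hle : ‖x - r‖ ≤ ‖x - p‖ := (hPW x).2 _ hpW
  have hip : ⟪x - p, r - p⟫ ≤ 0 := by
    have h1 : ⟪x - p, r⟫ ≤ 0 := by
      rw [real_inner_comm]; exact hxp r hrW
    rw [inner_sub_right, ho, sub_zero]; exact h1
  have hexp : ‖x - r‖^2 = ‖x - p‖^2 - 2 * ⟪x - p, r - p⟫ + ‖r - p‖^2 := by
    have : x - r = (x - p) - (r - p) := by abel
    rw [this, norm_sub_sq_real]
  have hsq := pow_le_pow_left₀ (norm_nonneg _) hle 2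
  have : ‖r - p‖^2 ≤ 0 := by nlinarith
  have hrp : r - p = 0 := by
    have hn0 : ‖r - p‖ = 0 := by nlinarith [norm_nonneg (r - p), sq_nonneg ‖r - p‖]
    exact norm_eq_zero.mp hn0
  have := sub_eq_zero.mp hrp
  rw [hr] at this; exact this

/-- bipolar via the projection -/
lemma mem_of_forall_pol (hWadd : ∀ x ∈ W, ∀ y ∈ W, x + y ∈ W)
    (hWsmul : ∀ t : ℝ, 0 ≤ t → ∀ x ∈ W, t • x ∈ W)
    (hWne : W.Nonempty)
    (hPW : ∀ x, PW x ∈ W ∧ ∀ y ∈ W, ‖x - PW x‖ ≤ ‖x - y‖) {x : E}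
    (hx : ∀ y ∈ pol W, ⟪x, y⟫ ≤ 0) : x ∈ W := by
  obtain ⟨hpol, ho⟩ := proj_char hWadd hWsmul hWne hPW x
  have h1 : ⟪x, x - PW x⟫ ≤ 0 := hx _ hpol
  have : ‖x - PW x‖^2 = ⟪x - PW x, x⟫ - ⟪x - PW x, PW x⟫ := by
    rw [← inner_sub_right, real_inner_self_eq_norm_sq]
  rw [ho, sub_zero, real_inner_comm] at this
  have hz : x - PW x = 0 := by
    have h2 : ‖x - PW x‖^2 ≤ 0 := this ▸ h1
    have := sq_nonneg ‖x - PW x‖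
    have : ‖x - PW x‖ = 0 := by nlinarith [norm_nonneg (x - PW x)]
    exact norm_eq_zero.mp this
  have := sub_eq_zero.mp hz
  rw [this]; exact (hPW x).1

end Proj

lemma zero_mem_pol (W : Set E) : (0 : E) ∈ pol W := fun x _ => by simp



theorem sufficiency {W : Set E} {PW : E → E}
    (hPW : ∀ x, PW x ∈ W ∧ ∀ y ∈ W, ‖x - PW x‖ ≤ ‖x - y‖)
    (hchar : ∀ x : E, (x - PW x) ∈ pol W ∧ ⟪x - PW x, PW x⟫ = 0)
    (hbip : ∀ x : E, (∀ y ∈ pol W, ⟪x, y⟫ ≤ 0) → x ∈ W)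
    {k : ℕ} {u : Fin k → E} (hind : LinearIndependent ℝ u)
    (hob : ∀ i j : Fin k, i ≠ j → ⟪u i, u j⟫ ≤ 0)
    (hpol : pol W = {y | ∃ t : Fin k → ℝ, (∀ i, 0 ≤ t i) ∧ y = ∑ i, t i • u i}) :
    ∀ a b : E, b - a ∈ W → PW b - PW a ∈ W := by
  classical
  have humem : ∀ j, u j ∈ pol W := by
    intro j
    rw [hpol]
    refine ⟨fun i => if i = j then 1 else 0, fun i => by positivity, ?_⟩
    simp [ite_smul]
  have humem' : ∀ (j) (x), x ∈ W → ⟪u j, x⟫ ≤ 0 := fun j x hx => by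
    rw [real_inner_comm]; exact humem j x hx
  have main : ∀ x : E, ∃ t : Fin k → ℝ, (∀ i, 0 ≤ t i) ∧
      x - PW x = ∑ i, t i • u i ∧ (∀ j, t j * ⟪u j, PW x⟫ = 0) := by
    intro x
    obtain ⟨hxpol, hxo⟩ := hchar x
    rw [hpol] at hxpol
    obtain ⟨t, ht0, hte⟩ := hxpol
    refine ⟨t, ht0, hte, ?_⟩
    have hsum : ∑ j, t j * ⟪u j, PW x⟫ = 0 := by
      have h1 : ⟪x - PW x, PW x⟫ = ∑ j, t j * ⟪u j, PW x⟫ := by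
        rw [hte, sum_inner]
        exact Finset.sum_congr rfl fun j _ => real_inner_smul_left _ _ _
      rw [← h1, hxo]
    have hterm : ∀ j ∈ Finset.univ, t j * ⟪u j, PW x⟫ ≤ 0 := fun j _ =>
      mul_nonpos_of_nonneg_of_nonpos (ht0 j) (humem' j _ (hPW x).1)
    intro j
    exact (Finset.sum_eq_zero_iff_of_nonpos hterm).mp hsum j (Finset.mem_univ j)
  intro a b hba
  obtain ⟨t, ht0, hta, htc⟩ := main a
  obtain ⟨s, hs0, hsb, hsc⟩ := main b
  set p := PW a with hp
  set q := PW b with hq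
  set δ : Fin k → ℝ := fun i => t i - s i with hδ
  set U : E := ∑ i, δ i • u i with hU
  have hUeq : U = (a - p) - (b - q) := by
    rw [hU, hta, hsb, ← Finset.sum_sub_distrib]
    exact Finset.sum_congr rfl fun i _ => (sub_smul _ _ _)
  have hqp : q - p = (b - a) + U := by rw [hUeq]; abel
  have hc : ∀ j, ⟪u j, b - a⟫ ≤ 0 := fun j => by
    rw [real_inner_comm]; exact humem j _ hba
  have hinq : ∀ j, ⟪u j, q⟫ ≤ 0 := fun j => humem' j _ (hPW b).1
  have hinp : ∀ j, ⟪u j, p⟫ ≤ 0 := fun j => humem' j _ (hPW a).1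
  have hiU : ∀ j, ⟪u j, U⟫ = ⟪u j, q - p⟫ - ⟪u j, b - a⟫ := by
    intro j
    rw [hqp, inner_add_right]; ring
  have hS4 : ∀ j, δ j < 0 → 0 ≤ ⟪u j, U⟫ := by
    intro j hj
    have hsj : 0 < s j := by
      have h1 := ht0 j
      have h2 : δ j = t j - s j := rfl
      linarith [h2 ▸ hj]
    have hq0 : ⟪u j, q⟫ = 0 := by
      rcases mul_eq_zero.mp (hsc j) with h | h
      · exact absurd h (ne_of_gt hsj)
      · exact h
    have h2 : ⟪u j, q - p⟫ = -⟪u j, p⟫ := by rw [inner_sub_right, hq0]; ring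
    rw [hiU j, h2]
    have := hinp j; have := hc j; linarith
  set δm : Fin k → ℝ := fun i => max (-δ i) 0 with hδm
  set δp : Fin k → ℝ := fun i => max (δ i) 0 with hδp
  set Um : E := ∑ i, δm i • u i with hUm
  set Up : E := ∑ i, δp i • u i with hUp
  have hsplit : U = Up - Um := by
    rw [hU, hUp, hUm, ← Finset.sum_sub_distrib]
    refine Finset.sum_congr rfl fun i _ => ?_
    rw [← sub_smul]
    congr 1
    show δ i = max (δ i) 0 - max (-δ i) 0
    rcases le_or_gt (δ i) 0 with h | h
    · rw [max_eq_right h, max_eq_left (by linarith)]; ring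
    · rw [max_eq_left (le_of_lt h), max_eq_right (by linarith)]; ring
  have h1 : 0 ≤ ∑ j, δm j * ⟪u j, U⟫ := by
    refine Finset.sum_nonneg fun j _ => ?_
    rcases lt_or_ge (δ j) 0 with h | h
    · exact mul_nonneg (le_max_right _ _) (hS4 j h)
    · have hz : δm j = 0 := by
        show max (-δ j) 0 = 0
        rw [max_eq_right (by linarith)]
      rw [hz, zero_mul]
  have h2 : ∑ j, δm j * ⟪u j, U⟫ = ⟪Um, U⟫ := by
    rw [hUm, sum_inner]
    exact Finset.sum_congr rfl fun j _ => (real_inner_smul_left _ _ _).symm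
  have h3 : ⟪Um, Up⟫ ≤ 0 := by
    rw [hUm, sum_inner]
    refine Finset.sum_nonpos fun i _ => ?_
    rw [real_inner_smul_left, hUp, inner_sum]
    rw [Finset.mul_sum]
    refine Finset.sum_nonpos fun j _ => ?_
    rw [real_inner_smul_right]
    rcases eq_or_ne i j with rfl | hij
    · have : δm i * δp i = 0 := by
        rw [hδm, hδp]
        rcases le_or_gt (δ i) 0 with h | h
        · simp [max_eq_right h]
        · simp [max_eq_right (neg_nonpos.mpr (le_of_lt h))]
      rw [← mul_assoc, this, zero_mul]
    · have hnn : 0 ≤ δm i * δp j := mul_nonneg (le_max_right _ _) (le_max_right _ _)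
      have := hob i j hij
      rw [← mul_assoc]
      exact mul_nonpos_of_nonneg_of_nonpos hnn this
  have h4 : ⟪Um, U⟫ = ⟪Um, Up⟫ - ‖Um‖ ^ 2 := by
    rw [hsplit, inner_sub_right, real_inner_self_eq_norm_sq]
  have hUm0 : Um = 0 := by
    have : ‖Um‖ ^ 2 ≤ 0 := by rw [h2, h4] at h1; linarith
    have hn : ‖Um‖ = 0 := by nlinarith [norm_nonneg Um, sq_nonneg ‖Um‖]
    exact norm_eq_zero.mp hn
  have hδ0 : ∀ i, 0 ≤ δ i := by
    have := Fintype.linearIndependent_iff.mp hind δm (by rw [← hUm, hUm0])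
    intro i
    have h : max (-δ i) 0 = 0 := this i
    by_contra hlt
    push_neg at hlt
    rw [max_eq_left (by linarith)] at h
    linarith
  have hfin : ∀ j, ⟪u j, q - p⟫ ≤ 0 := by
    intro j
    by_contra hpos
    push_neg at hpos
    have hpj : ⟪u j, p⟫ < 0 := by
      rw [inner_sub_right] at hpos
      have := hinq j; linarith
    have htj : t j = 0 := by
      rcases mul_eq_zero.mp (htc j) with h | h
      · exact h
      · exact absurd h (ne_of_lt hpj)
    have hδj : δ j = 0 := by
      have h2 : δ j = t j - s j := rfl
      have := hs0 j
      have := hδ0 j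
      linarith
    have hUj : ⟪u j, U⟫ ≤ 0 := by
      rw [hU, inner_sum]
      refine Finset.sum_nonpos fun i _ => ?_
      rw [real_inner_smul_right]
      rcases eq_or_ne i j with rfl | hij
      · rw [hδj, zero_mul]
      · exact mul_nonpos_of_nonneg_of_nonpos (hδ0 i) (hob j i (Ne.symm hij))
    have := hiU j
    have := hc j
    linarith
  have : q - p ∈ W := by
    refine hbip _ fun y hy => ?_
    rw [hpol] at hy
    obtain ⟨r, hr0, rfl⟩ := hy
    rw [inner_sum]
    refine Finset.sum_nonpos fun i _ => ?_
    rw [real_inner_smul_right]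
    refine mul_nonpos_of_nonneg_of_nonpos (hr0 i) ?_
    rw [real_inner_comm]
    exact hfin i
  exact this




theorem obtuse [FiniteDimensional ℝ E] {W : Set E} {PW : E → E}
    (hWsmul : ∀ t : ℝ, 0 ≤ t → ∀ x ∈ W, t • x ∈ W)
    (hPW : ∀ x, PW x ∈ W ∧ ∀ y ∈ W, ‖x - PW x‖ ≤ ‖x - y‖)
    (hbip : ∀ x : E, (∀ y ∈ pol W, ⟪x, y⟫ ≤ 0) → x ∈ W)
    (hpuniq : ∀ x p : E, p ∈ W → x - p ∈ pol W → ⟪x - p, p⟫ = 0 → PW x = p)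
    (hiso : ∀ u v : E, v - u ∈ W → PW v - PW u ∈ W)
    {y z a b : E}
    (hyD : y ∈ pol W) (hy1 : ‖y‖ = 1)
    (haD : ∀ d ∈ pol W, ⟪a, d⟫ ≤ 0)
    (hay : ∀ d ∈ pol W, (⟪a, d⟫ = 0 ↔ ∃ r : ℝ, 0 ≤ r ∧ d = r • y))
    (hzD : z ∈ pol W) (hz1 : ‖z‖ = 1)
    (hbD : ∀ d ∈ pol W, ⟪b, d⟫ ≤ 0)
    (hbz : ∀ d ∈ pol W, (⟪b, d⟫ = 0 ↔ ∃ r : ℝ, 0 ≤ r ∧ d = r • z))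
    (hne : y ≠ z) : ⟪y, z⟫ ≤ 0 := by
  by_contra hyzc
  push_neg at hyzc
  have haK : a ∈ W := hbip a haD
  have hbK : b ∈ W := hbip b hbD
  have hay0 : ⟪a, y⟫ = 0 := (hay y hyD).mpr ⟨1, zero_le_one, (one_smul ℝ y).symm⟩
  have hbz0 : ⟪b, z⟫ = 0 := (hbz z hzD).mpr ⟨1, zero_le_one, (one_smul ℝ z).symm⟩
  -- unit vectors in pol W equal to r • y must be y itself
  have hunit : ∀ {v w : E}, ‖w‖ = 1 → ∀ r : ℝ, 0 ≤ r → v = r • w → ‖v‖ = 1 → v = w := by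
    intro v w hw r hr hv hv1
    have : ‖v‖ = r * ‖w‖ := by rw [hv, norm_smul, Real.norm_eq_abs, abs_of_nonneg hr]
    rw [hv1, hw, mul_one] at this
    rw [hv, ← this, one_smul]
  have haz : ⟪a, z⟫ < 0 := by
    rcases lt_or_eq_of_le (haD z hzD) with h | h
    · exact h
    · obtain ⟨r, hr, hzr⟩ := (hay z hzD).mp h
      exact absurd (hunit hy1 r hr hzr hz1).symm hne
  have hby : ⟪b, y⟫ < 0 := by
    rcases lt_or_eq_of_le (hbD y hyD) with h | h
    · exact h
    · obtain ⟨r, hr, hyr⟩ := (hbz y hyD).mp h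
      exact absurd (hunit hz1 r hr hyr hy1) hne
  set α : ℝ := (1 - ⟪a, z⟫) / ⟪y, z⟫ with hα
  have hα0 : 0 < α := div_pos (by linarith) hyzc
  have hαz : ⟪a, z⟫ + α * ⟪y, z⟫ = 1 := by
    rw [hα]; field_simp; ring
  set g : E := -a - α • y with hg
  have hfval : ∀ d : E, ⟪g, d⟫ = -⟪a, d⟫ - α * ⟪y, d⟫ := by
    intro d
    rw [hg, inner_sub_left, inner_neg_left, real_inner_smul_left]
  set S : Set E := {d | d ∈ pol W ∧ ‖d‖ = 1} with hS
  have hSclosed : IsClosed S := by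
    have : S = pol W ∩ {d | ‖d‖ = 1} := rfl
    rw [this]
    exact (isClosed_pol W).inter (isClosed_eq continuous_norm continuous_const)
  have hScompact : IsCompact S := by
    refine (isCompact_closedBall (0:E) 1).of_isClosed_subset hSclosed ?_
    intro d hd
    simp [Metric.mem_closedBall, dist_eq_norm, hd.2]
  set C : Set E := S ∩ {d | 0 ≤ ⟪g, d⟫} with hC
  have hCcompact : IsCompact C :=
    hScompact.inter_right (isClosed_le continuous_const
      (Continuous.inner continuous_const continuous_id))
  have hbC : ∀ d ∈ C, ⟪b, d⟫ < 0 := by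
    rintro d ⟨⟨hdD, hd1⟩, hdf⟩
    rcases lt_or_eq_of_le (hbD d hdD) with h | h
    · exact h
    · obtain ⟨r, hr, hdr⟩ := (hbz d hdD).mp h
      have hdz : d = z := hunit hz1 r hr hdr hd1
      have hgz : 0 ≤ ⟪g, z⟫ := by rw [← hdz]; exact hdf
      rw [hfval z] at hgz
      exfalso
      linarith
  have hμex : ∃ μ : ℝ, 0 ≤ μ ∧ ∀ d ∈ C, μ * ⟪b, d⟫ + ⟪g, d⟫ ≤ 0 := by
    rcases C.eq_empty_or_nonempty with hCe | hCne
    · exact ⟨0, le_rfl, fun d hd => by rw [hCe] at hd; exact absurd hd (Set.notMem_empty d)⟩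
    · have hcb : Continuous fun d : E => ⟪b, d⟫ :=
        Continuous.inner continuous_const continuous_id
      have hcg : Continuous fun d : E => ⟪g, d⟫ :=
        Continuous.inner continuous_const continuous_id
      obtain ⟨d₅, hd₅C, hd₅max⟩ := hCcompact.exists_isMaxOn hCne hcb.continuousOn
      obtain ⟨d₆, hd₆C, hd₆max⟩ := hCcompact.exists_isMaxOn hCne hcg.continuousOn
      set c₅ : ℝ := ⟪b, d₅⟫ with hc₅
      set M : ℝ := ⟪g, d₆⟫ with hM
      have hc₅neg : c₅ < 0 := hbC d₅ hd₅C
      have hM0 : 0 ≤ M := hd₆C.2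
      refine ⟨M / (-c₅), div_nonneg hM0 (by linarith), ?_⟩
      intro d hdC
      have h1 : ⟪b, d⟫ ≤ c₅ := by simpa using hd₅max hdC
      have h2 : ⟪g, d⟫ ≤ M := by simpa using hd₆max hdC
      have h3 : M / (-c₅) * ⟪b, d⟫ ≤ M / (-c₅) * c₅ :=
        mul_le_mul_of_nonneg_left h1 (div_nonneg hM0 (by linarith))
      have h4 : M / (-c₅) * c₅ = -M := by
        rw [div_mul_eq_mul_div, div_eq_iff (by linarith : (-c₅) ≠ 0)]
        ring
      linarith
  obtain ⟨μ, hμ0, hμprop⟩ := hμex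
  set w : E := μ • b - a - α • y with hw
  have hwinner : ∀ d : E, ⟪w, d⟫ = μ * ⟪b, d⟫ + ⟪g, d⟫ := by
    intro d
    have : w = μ • b + g := by rw [hw, hg]; abel
    rw [this, inner_add_left, real_inner_smul_left]
  have hwpol : ∀ d ∈ pol W, ⟪w, d⟫ ≤ 0 := by
    intro d hdD
    rcases eq_or_ne d 0 with rfl | hd0
    · simp
    · have hnd : (0:ℝ) < ‖d‖ := norm_pos_iff.mpr hd0
      set d' : E := ‖d‖⁻¹ • d with hd'
      have hd'D : d' ∈ pol W := pol_smul (by positivity) hdD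
      have hd'1 : ‖d'‖ = 1 := by
        rw [hd', norm_smul, norm_inv, norm_norm, inv_mul_cancel₀ (ne_of_gt hnd)]
      have hd'S : d' ∈ S := ⟨hd'D, hd'1⟩
      have key : ⟪w, d'⟫ ≤ 0 := by
        by_cases hdC : d' ∈ C
        · rw [hwinner]; exact hμprop d' hdC
        · have hfd : ⟪g, d'⟫ < 0 := by
            by_contra hge
            push_neg at hge
            exact hdC ⟨hd'S, hge⟩
          have hbd : ⟪b, d'⟫ ≤ 0 := hbD d' hd'D
          rw [hwinner]
          nlinarith
      have hdd : d = ‖d‖ • d' := by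
        rw [hd', smul_smul, mul_inv_cancel₀ (ne_of_gt hnd), one_smul]
      have hval : ⟪w, d⟫ = ‖d‖ * ⟪w, d'⟫ := by
        conv_lhs => rw [hdd]
        rw [real_inner_smul_right]
      rw [hval]
      exact mul_nonpos_of_nonneg_of_nonpos (le_of_lt hnd) key
  have hwK : w ∈ W := hbip w fun d hd => hwpol d hd
  have hproj1 : PW (a + α • y) = a := by
    refine hpuniq _ _ haK ?_ ?_
    · have : a + α • y - a = α • y := by abel
      rw [this]
      exact pol_smul (le_of_lt hα0) hyD
    · have h1 : a + α • y - a = α • y := by abel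
      rw [h1, real_inner_smul_left, real_inner_comm, hay0, mul_zero]
  have hproj2 : PW (μ • b) = μ • b := by
    refine hpuniq _ _ (hWsmul μ hμ0 b hbK) ?_ ?_
    · rw [sub_self]; exact zero_mem_pol W
    · rw [sub_self, inner_zero_left]
  have hdiff : μ • b - (a + α • y) ∈ W := by
    have : μ • b - (a + α • y) = w := by rw [hw]; abel
    rwa [this]
  have := hiso (a + α • y) (μ • b) hdiff
  rw [hproj1, hproj2] at this
  have hcontr : ⟪μ • b - a, z⟫ ≤ 0 := hzD _ this
  rw [inner_sub_left, real_inner_smul_left, hbz0, mul_zero] at hcontr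
  linarith




lemma pointed {W : Set E} (hWgen : W - W = Set.univ) :
    ∀ y ∈ pol W, -y ∈ pol W → y = 0 := by
  intro y hy hny
  have hz : ∀ z : E, ⟪z, y⟫ = 0 := by
    intro z
    have hz' : z ∈ W - W := by rw [hWgen]; trivial
    obtain ⟨x₁, hx₁, x₂, hx₂, rfl⟩ := hz'
    have h1 : ⟪x₁, y⟫ ≤ 0 := hy x₁ hx₁
    have h2 : ⟪x₂, y⟫ ≤ 0 := hy x₂ hx₂
    have h3 : ⟪x₁, -y⟫ ≤ 0 := hny x₁ hx₁
    have h4 : ⟪x₂, -y⟫ ≤ 0 := hny x₂ hx₂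
    rw [inner_neg_right] at h3 h4
    rw [inner_sub_left]
    linarith
  have := hz y
  rw [real_inner_self_eq_norm_sq] at this
  have : ‖y‖ = 0 := by nlinarith [norm_nonneg y]
  exact norm_eq_zero.mp this

lemma exists_strict_pos [FiniteDimensional ℝ E] {W : Set E}
    (hWconv : Convex ℝ W) (hWne : W.Nonempty) (hWgen : W - W = Set.univ) :
    ∃ (e : E) (c : ℝ), 0 < c ∧ ∀ y ∈ pol W, c * ‖y‖ ≤ ⟪e, y⟫ := by
  have hvspan : vectorSpan ℝ W = ⊤ := by
    rw [vectorSpan_def]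
    have hvs : W -ᵥ W = Set.univ := by
      rw [← hWgen]
      ext z
      simp only [Set.mem_vsub, Set.mem_sub]
      constructor
      · rintro ⟨x, hx, y, hy, rfl⟩; exact ⟨x, hx, y, hy, rfl⟩
      · rintro ⟨x, hx, y, hy, rfl⟩; exact ⟨x, hx, y, hy, rfl⟩
    rw [hvs, Submodule.span_univ]
  have hspan : affineSpan ℝ W = ⊤ := by
    rw [AffineSubspace.affineSpan_eq_top_iff_vectorSpan_eq_top_of_nonempty ℝ E E hWne]
    exact hvspan
  have hint : (interior W).Nonempty := by
    rw [hWconv.interior_nonempty_iff_affineSpan_eq_top]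
    exact hspan
  obtain ⟨e', he'⟩ := hint
  obtain ⟨ε, hε, hball⟩ := Metric.mem_nhds_iff.mp (mem_interior_iff_mem_nhds.mp he')
  refine ⟨-e', ε / 2, by linarith, ?_⟩
  intro y hy
  rcases eq_or_ne y 0 with rfl | hy0
  · simp
  · have hny : (0:ℝ) < ‖y‖ := norm_pos_iff.mpr hy0
    set s : ℝ := ε / 2 * ‖y‖⁻¹ with hs
    have hpt : e' + s • y ∈ W := by
      apply hball
      rw [Metric.mem_ball, dist_eq_norm]
      have : e' + s • y - e' = s • y := by abel
      rw [this, norm_smul, Real.norm_eq_abs, abs_of_nonneg (by positivity)]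
      rw [hs, mul_assoc, inv_mul_cancel₀ (ne_of_gt hny), mul_one]
      linarith
    have h1 : ⟪e' + s • y, y⟫ ≤ 0 := hy _ hpt
    rw [inner_add_left, real_inner_smul_left, real_inner_self_eq_norm_sq] at h1
    have h2 : s * ‖y‖ ^ 2 = ε / 2 * ‖y‖ := by
      rw [hs]; field_simp
    rw [inner_neg_left]
    nlinarith
  
lemma sum_mem_pol {W : Set E} {ι : Type*} (s : Finset ι) (f : ι → E)
    (hf : ∀ i ∈ s, f i ∈ pol W) : (∑ i ∈ s, f i) ∈ pol W := by
  intro x hx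
  rw [inner_sum]
  exact Finset.sum_nonpos fun i hi => hf i hi x hx

lemma obtuse_linearIndependent {D : Set E}
    (hpt : ∀ y ∈ D, -y ∈ D → y = 0)
    (hsmul : ∀ (t : ℝ), 0 ≤ t → ∀ y ∈ D, t • y ∈ D)
    (hsum : ∀ {ι : Type} (s : Finset ι) (f : ι → E), (∀ i ∈ s, f i ∈ D) → (∑ i ∈ s, f i) ∈ D)
    {ι : Type} [Fintype ι] {u : ι → E}
    (humem : ∀ i, u i ∈ D) (hunit : ∀ i, ‖u i‖ = 1)
    (hob : ∀ i j : ι, i ≠ j → ⟪u i, u j⟫ ≤ 0) :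
    LinearIndependent ℝ u := by
  classical
  rw [Fintype.linearIndependent_iff]
  intro g hg
  set gp : ι → ℝ := fun i => max (g i) 0 with hgp
  set gm : ι → ℝ := fun i => max (-g i) 0 with hgm
  have hsplit : ∀ i, g i = gp i - gm i := by
    intro i
    show g i = max (g i) 0 - max (-g i) 0
    rcases le_or_gt (g i) 0 with h | h
    · rw [max_eq_right h, max_eq_left (by linarith)]; ring
    · rw [max_eq_left (le_of_lt h), max_eq_right (by linarith)]; ring
  set x : E := ∑ i, gp i • u i with hx
  have hxm : x = ∑ i, gm i • u i := by
    have h1 : x - ∑ i, gm i • u i = ∑ i, g i • u i := by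
      rw [hx, ← Finset.sum_sub_distrib]
      refine Finset.sum_congr rfl fun i _ => ?_
      rw [← sub_smul, ← hsplit]
    have h2 : x - ∑ i, gm i • u i = 0 := by rw [h1, hg]
    have := sub_eq_zero.mp h2
    exact this
  have hxnorm : ‖x‖ ^ 2 ≤ 0 := by
    have h1 : ‖x‖ ^ 2 = ⟪∑ i, gp i • u i, ∑ i, gm i • u i⟫ := by
      rw [← real_inner_self_eq_norm_sq]
      nth_rewrite 2 [hxm]
      rw [hx]
    rw [h1, sum_inner]
    refine Finset.sum_nonpos fun i _ => ?_
    rw [real_inner_smul_left, inner_sum, Finset.mul_sum]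
    refine Finset.sum_nonpos fun j _ => ?_
    rw [real_inner_smul_right, ← mul_assoc]
    rcases eq_or_ne i j with rfl | hij
    · have hz : gp i * gm i = 0 := by
        show max (g i) 0 * max (-g i) 0 = 0
        rcases le_or_gt (g i) 0 with h | h
        · rw [max_eq_right h, zero_mul]
        · rw [max_eq_right (by linarith : -g i ≤ 0), mul_zero]
      rw [hz, zero_mul]
    · exact mul_nonpos_of_nonneg_of_nonpos
        (mul_nonneg (le_max_right _ _) (le_max_right _ _)) (hob i j hij)
  have hx0 : x = 0 := by
    have hn : ‖x‖ = 0 := by nlinarith [norm_nonneg x, sq_nonneg ‖x‖]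
    exact norm_eq_zero.mp hn
  have hkey : ∀ (h : ι → ℝ), (∀ i, 0 ≤ h i) → ∑ i, h i • u i = 0 → ∀ i, h i = 0 := by
    intro h h0 hsum0 i₀
    have hmem : h i₀ • u i₀ ∈ D := hsmul _ (h0 i₀) _ (humem i₀)
    have hneg : -(h i₀ • u i₀) ∈ D := by
      have h1 : -(h i₀ • u i₀) = ∑ i ∈ Finset.univ.erase i₀, h i • u i := by
        have := Finset.add_sum_erase Finset.univ (fun i => h i • u i) (Finset.mem_univ i₀)
        rw [← this] at hsum0
        linear_combination (norm := abel) -hsum0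
      rw [h1]
      exact hsum _ _ fun i _ => hsmul _ (h0 i) _ (humem i)
    have := hpt _ hmem hneg
    rcases smul_eq_zero.mp this with h | h
    · exact h
    · exfalso
      have := hunit i₀
      rw [h, norm_zero] at this
      norm_num at this
  have hgp0 := hkey gp (fun i => le_max_right _ _) (hx.symm.trans hx0)
  have hgm0 := hkey gm (fun i => le_max_right _ _) (hxm.symm.trans hx0)
  intro i
  rw [hsplit i, hgp0 i, hgm0 i, sub_zero]




/-- Exposed unit directions of the polar cone. -/
def Expo (W : Set E) (y : E) : Prop :=
  y ∈ pol W ∧ ‖y‖ = 1 ∧ ∃ a : E, (∀ d ∈ pol W, ⟪a, d⟫ ≤ 0) ∧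
    ∀ d ∈ pol W, (⟪a, d⟫ = 0 ↔ ∃ r : ℝ, 0 ≤ r ∧ d = r • y)

lemma expo_finite [FiniteDimensional ℝ E] {W : Set E}
    (hLI : ∀ {ι : Type} [Fintype ι] (v : ι → E), (∀ i, v i ∈ pol W) →
      (∀ i, ‖v i‖ = 1) → (∀ i j, i ≠ j → ⟪v i, v j⟫ ≤ 0) → LinearIndependent ℝ v)
    (hobt : ∀ y z : E, Expo W y → Expo W z → y ≠ z → ⟪y, z⟫ ≤ 0) :
    {y | Expo W y}.Finite := by
  by_contra hinf
  have hi : {y | Expo W y}.Infinite := hinf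
  obtain ⟨t, hts, htc⟩ := hi.exists_subset_card_eq (Module.finrank ℝ E + 1)
  have hmem : ∀ i : ↥t, Expo W (i : E) := fun i => hts i.2
  have hind : LinearIndependent ℝ (fun i : ↥t => (i : E)) := by
    refine hLI (ι := ↥t) (fun i : ↥t => (i : E)) (fun i => (hmem i).1) (fun i => (hmem i).2.1) ?_
    intro i j hij
    exact hobt _ _ (hmem i) (hmem j) (fun h => hij (Subtype.coe_injective h))
  have hcard := hind.fintype_card_le_finrank
  rw [Fintype.card_coe, htc] at hcard
  omega

set_option maxHeartbeats 2000000 in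
theorem necessity [FiniteDimensional ℝ E] {W : Set E}
    (hLI : ∀ {ι : Type} [Fintype ι] (v : ι → E), (∀ i, v i ∈ pol W) →
      (∀ i, ‖v i‖ = 1) → (∀ i j, i ≠ j → ⟪v i, v j⟫ ≤ 0) → LinearIndependent ℝ v)
    (hobt : ∀ y z : E, Expo W y → Expo W z → y ≠ z → ⟪y, z⟫ ≤ 0)
    {e : E} {c : ℝ} (hc0 : 0 < c) (hec : ∀ y ∈ pol W, c * ‖y‖ ≤ ⟪e, y⟫) :
    ∃ (k : ℕ) (u : Fin k → E), LinearIndependent ℝ u ∧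
      (∀ i j : Fin k, i ≠ j → ⟪u i, u j⟫ ≤ 0) ∧
      pol W = {y | ∃ t : Fin k → ℝ, (∀ i, 0 ≤ t i) ∧ y = ∑ i, t i • u i} := by
  classical
  have hfx : {y | Expo W y}.Finite := expo_finite hLI hobt
  set k : ℕ := hfx.toFinset.card with hk
  set eqv := hfx.toFinset.equivFin with heqv
  set u : Fin k → E := fun i => (eqv.symm i : E) with hu
  have hui : ∀ i, Expo W (u i) := by
    intro i
    have := (eqv.symm i).2
    rwa [Set.Finite.mem_toFinset] at this
  have huinj : Function.Injective u := by
    intro i j hij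
    have h1 : (eqv.symm i : E) = (eqv.symm j : E) := hij
    have h2 : eqv.symm i = eqv.symm j := Subtype.coe_injective h1
    exact eqv.symm.injective h2
  have hucov : ∀ y : E, Expo W y → ∃ i, u i = y := by
    intro y hy
    refine ⟨eqv ⟨y, ?_⟩, ?_⟩
    · rwa [Set.Finite.mem_toFinset]
    · rw [hu]; simp
  have hob : ∀ i j : Fin k, i ≠ j → ⟪u i, u j⟫ ≤ 0 := by
    intro i j hij
    exact hobt _ _ (hui i) (hui j) (fun h => hij (huinj h))
  have hind : LinearIndependent ℝ u :=
    hLI u (fun i => (hui i).1) (fun i => (hui i).2.1) hob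
  refine ⟨k, u, hind, hob, ?_⟩
  apply Set.Subset.antisymm
  swap
  · rintro y ⟨t, ht0, rfl⟩
    exact sum_mem_pol _ _ fun i _ => pol_smul (ht0 i) (hui i).1
  -- hard inclusion
  intro d₀ hd₀
  by_contra hc'
  -- the finitely generated cone
  set coneE : Set E := {y | ∃ t : Fin k → ℝ, (∀ i, 0 ≤ t i) ∧ y = ∑ i, t i • u i}
    with hconeE
  have hd₀n : d₀ ∉ coneE := hc'
  -- closedness
  set T : (Fin k → ℝ) →ₗ[ℝ] E :=
    { toFun := fun t => ∑ i, t i • u i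
      map_add' := by
        intro s t
        simp [add_smul, Finset.sum_add_distrib]
      map_smul' := by
        intro r t
        simp [smul_smul, Finset.smul_sum] } with hT
  have hTinj : Function.Injective T := by
    intro s t hst
    have h0 : T (s - t) = 0 := by rw [map_sub, hst, sub_self]
    have h1 : ∑ i, (s - t) i • u i = 0 := h0
    have := Fintype.linearIndependent_iff.mp hind _ h1
    funext i
    have hi := this i
    simp only [Pi.sub_apply] at hi
    linarith
  have horth : IsClosed {t : Fin k → ℝ | ∀ i, 0 ≤ t i} := by
    have : {t : Fin k → ℝ | ∀ i, 0 ≤ t i} = ⋂ i, {t | 0 ≤ t i} := by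
      ext t; simp [Set.mem_iInter]
    rw [this]
    exact isClosed_iInter fun i => isClosed_le continuous_const (continuous_apply i)
  have hconeT : coneE = T '' {t | ∀ i, 0 ≤ t i} := by
    ext y
    constructor
    · rintro ⟨t, ht0, rfl⟩; exact ⟨t, ht0, rfl⟩
    · rintro ⟨t, ht0, rfl⟩; exact ⟨t, ht0, rfl⟩
  have hclosed : IsClosed coneE := by
    rw [hconeT]
    exact (LinearMap.isClosedEmbedding_of_injective (LinearMap.ker_eq_bot.mpr hTinj)).isClosedMap _ horth
  have hconv : Convex ℝ coneE := by
    rintro x ⟨tx, htx, rfl⟩ y ⟨ty, hty, rfl⟩ a b ha hb hab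
    refine ⟨fun i => a * tx i + b * ty i,
      fun i => add_nonneg (mul_nonneg ha (htx i)) (mul_nonneg hb (hty i)), ?_⟩
    rw [Finset.smul_sum, Finset.smul_sum, ← Finset.sum_add_distrib]
    refine Finset.sum_congr rfl fun i _ => ?_
    rw [smul_smul, smul_smul, ← add_smul]
  obtain ⟨f, u₀, hfs, hfu⟩ := geometric_hahn_banach_closed_point hconv hclosed hd₀n
  have h0cone : (0 : E) ∈ coneE := ⟨0, fun i => le_rfl, by simp⟩
  have hu₀pos : 0 < u₀ := by
    have := hfs 0 h0cone
    simpa using this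
  have hfui : ∀ i, f (u i) ≤ 0 := by
    intro i
    by_contra hfi
    push_neg at hfi
    set r : ℝ := (u₀ + 1) / f (u i) with hr
    have hr0 : 0 ≤ r := le_of_lt (div_pos (by linarith) hfi)
    have hmem : r • u i ∈ coneE := by
      refine ⟨fun j => if j = i then r else 0, fun j => by positivity, ?_⟩
      simp [ite_smul]
    have := hfs _ hmem
    rw [map_smul] at this
    have hcalc : r • f (u i) = u₀ + 1 := by
      rw [hr, smul_eq_mul, div_mul_cancel₀ _ (ne_of_gt hfi)]
    rw [hcalc] at this
    linarith
  set xh : E := (InnerProductSpace.toDual ℝ E).symm f with hxh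
  have hxhv : ∀ v : E, ⟪xh, v⟫ = f v := fun v => InnerProductSpace.toDual_symm_apply
  have hxu : ∀ i, ⟪xh, u i⟫ ≤ 0 := fun i => (hxhv (u i)) ▸ hfui i
  have hxd : 0 < ⟪xh, d₀⟫ := by
    rw [hxhv]
    linarith
  -- compact base
  set B : Set E := {d | d ∈ pol W ∧ ⟪e, d⟫ = 1} with hB
  have hBclosed : IsClosed B := by
    have : B = pol W ∩ {d | ⟪e, d⟫ = 1} := rfl
    rw [this]
    exact (isClosed_pol W).inter
      (isClosed_eq (Continuous.inner continuous_const continuous_id) continuous_const)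
  have hBnorm : ∀ d ∈ B, ‖d‖ ≤ 1 / c := by
    rintro d ⟨hdD, hde⟩
    have := hec d hdD
    rw [hde] at this
    rw [le_div_iff₀ hc0]
    linarith [mul_comm c ‖d‖]
  have hBcompact : IsCompact B := by
    refine (isCompact_closedBall (0:E) (1/c)).of_isClosed_subset hBclosed ?_
    intro d hd
    rw [Metric.mem_closedBall, dist_eq_norm, sub_zero]
    exact hBnorm d hd
  have hd₀0 : d₀ ≠ 0 := by
    intro h
    rw [h] at hd₀n
    exact hd₀n h0cone
  have hed₀ : 0 < ⟪e, d₀⟫ := by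
    have h1 := hec d₀ hd₀
    have h2 : 0 < ‖d₀‖ := norm_pos_iff.mpr hd₀0
    nlinarith
  set d₁ : E := (⟪e, d₀⟫)⁻¹ • d₀ with hd₁
  have hd₁B : d₁ ∈ B := by
    constructor
    · exact pol_smul (le_of_lt (inv_pos.mpr hed₀)) hd₀
    · rw [hd₁, real_inner_smul_right, inv_mul_cancel₀ (ne_of_gt hed₀)]
  set M : ℝ := ⟪xh, d₁⟫ with hM
  have hM0 : 0 < M := by
    rw [hM, hd₁, real_inner_smul_right]
    exact mul_pos (inv_pos.mpr hed₀) hxd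
  set ρ : ℝ := 1 / c with hρ
  have hρ0 : 0 < ρ := by positivity
  set R : ℝ := ρ ^ 2 / M with hR
  have hR0 : 0 < R := by positivity
  -- farthest point
  have hGcont : Continuous fun d : E => ‖d + R • xh‖ :=
    (continuous_id.add continuous_const).norm
  obtain ⟨ds, hdsB, hdsmax'⟩ := hBcompact.exists_isMaxOn ⟨d₁, hd₁B⟩ hGcont.continuousOn
  have hdsmax : ∀ d ∈ B, ‖d + R • xh‖ ≤ ‖ds + R • xh‖ := by
    intro d hd
    simpa using hdsmax' hd
  have hsq : ∀ d : E, ‖d + R • xh‖ ^ 2 = ‖d‖ ^ 2 + 2 * R * ⟪xh, d⟫ + R ^ 2 * ‖xh‖ ^ 2 := by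
    intro d
    rw [norm_add_sq_real, real_inner_smul_right, norm_smul, Real.norm_eq_abs,
      abs_of_nonneg (le_of_lt hR0), real_inner_comm]
    ring
  have hsqmax : ∀ d ∈ B, ‖d‖ ^ 2 + 2 * R * ⟪xh, d⟫ ≤ ‖ds‖ ^ 2 + 2 * R * ⟪xh, ds⟫ := by
    intro d hd
    have h1 := hdsmax d hd
    have h2 := pow_le_pow_left₀ (norm_nonneg _) h1 2
    rw [hsq d, hsq ds] at h2
    linarith
  have hρM : ρ ^ 2 = R * M := by
    rw [hR, div_mul_cancel₀ _ (ne_of_gt hM0)]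
  have key1 : M / 2 ≤ ⟪xh, ds⟫ := by
    have h1 := hsqmax d₁ hd₁B
    have h2 : ‖ds‖ ≤ ρ := hBnorm ds hdsB
    have h3 : ‖ds‖ ^ 2 ≤ ρ ^ 2 := by nlinarith [norm_nonneg ds]
    have h4 : 0 ≤ ‖d₁‖ ^ 2 := sq_nonneg _
    rw [← hM] at h1
    nlinarith
  have hxds : 0 < ⟪xh, ds⟫ := lt_of_lt_of_le (by linarith) key1
  have hds0 : ds ≠ 0 := by
    intro h
    have := hdsB.2
    rw [h, inner_zero_right] at this
    norm_num at this
  set l : E := ds + R • xh with hl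
  have hstrict : ∀ d ∈ B, d ≠ ds → ⟪l, d⟫ < ⟪l, ds⟫ := by
    intro d hd hne
    by_contra hge
    push_neg at hge
    have hdd : d + R • xh = l + (d - ds) := by rw [hl]; abel
    have h1 : ‖d + R • xh‖ ^ 2 = ‖l‖ ^ 2 + 2 * ⟪l, d - ds⟫ + ‖d - ds‖ ^ 2 := by
      rw [hdd, norm_add_sq_real]
    have h2 : 0 ≤ ⟪l, d - ds⟫ := by
      rw [inner_sub_right]; linarith
    have h3 : 0 < ‖d - ds‖ ^ 2 := by
      have : d - ds ≠ 0 := sub_ne_zero.mpr hne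
      have := norm_pos_iff.mpr this
      positivity
    have h4 := hdsmax d hd
    have h5 := pow_le_pow_left₀ (norm_nonneg _) h4 2
    have h6 : ‖ds + R • xh‖ ^ 2 = ‖l‖ ^ 2 := by rw [hl]
    nlinarith
  set astar : E := l - ⟪l, ds⟫ • e with hastar
  have hval : ∀ d : E, ⟪astar, d⟫ = ⟪l, d⟫ - ⟪l, ds⟫ * ⟪e, d⟫ := by
    intro d
    rw [hastar, inner_sub_left, real_inner_smul_left]
  have hvalB : ∀ d ∈ B, ⟪astar, d⟫ = ⟪l, d⟫ - ⟪l, ds⟫ := by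
    intro d hd
    rw [hval, hd.2, mul_one]
  have hads : ⟪astar, ds⟫ = 0 := by
    rw [hvalB ds hdsB, sub_self]
  have hscale : ∀ d ∈ pol W, d ≠ 0 → ((⟪e, d⟫)⁻¹ • d ∈ B ∧ 0 < ⟪e, d⟫) := by
    intro d hdD hd0
    have hed : 0 < ⟪e, d⟫ := by
      have h1 := hec d hdD
      have h2 : 0 < ‖d‖ := norm_pos_iff.mpr hd0
      nlinarith
    refine ⟨⟨pol_smul (le_of_lt (inv_pos.mpr hed)) hdD, ?_⟩, hed⟩
    rw [real_inner_smul_right, inv_mul_cancel₀ (ne_of_gt hed)]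
  set ystar : E := ‖ds‖⁻¹ • ds with hystar
  have hdsn : 0 < ‖ds‖ := norm_pos_iff.mpr hds0
  have hy1 : ‖ystar‖ = 1 := by
    rw [hystar, norm_smul, norm_inv, norm_norm, inv_mul_cancel₀ (ne_of_gt hdsn)]
  have hysD : ystar ∈ pol W := pol_smul (by positivity) hdsB.1
  have hysds : ds = ‖ds‖ • ystar := by
    rw [hystar, smul_smul, mul_inv_cancel₀ (ne_of_gt hdsn), one_smul]
  have hExpo : Expo W ystar := by
    refine ⟨hysD, hy1, astar, ?_, ?_⟩
    · intro d hdD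
      rcases eq_or_ne d 0 with rfl | hd0
      · simp
      · obtain ⟨hd'B, hed⟩ := hscale d hdD hd0
        have hdec : d = ⟪e, d⟫ • ((⟪e, d⟫)⁻¹ • d) := by
          rw [smul_smul, mul_inv_cancel₀ (ne_of_gt hed), one_smul]
        have h1 : ⟪astar, (⟪e, d⟫)⁻¹ • d⟫ ≤ 0 := by
          rcases eq_or_ne ((⟪e, d⟫)⁻¹ • d) ds with hh | hh
          · rw [hh, hads]
          · have := hstrict _ hd'B hh
            rw [hvalB _ hd'B]
            linarith
        calc ⟪astar, d⟫ = ⟪e, d⟫ * ⟪astar, (⟪e, d⟫)⁻¹ • d⟫ := by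
              conv_lhs => rw [hdec]
              rw [real_inner_smul_right]
          _ ≤ 0 := mul_nonpos_of_nonneg_of_nonpos (le_of_lt hed) h1
    · intro d hdD
      constructor
      · intro hzero
        rcases eq_or_ne d 0 with rfl | hd0
        · exact ⟨0, le_rfl, by rw [zero_smul]⟩
        · obtain ⟨hd'B, hed⟩ := hscale d hdD hd0
          have hdec : d = ⟪e, d⟫ • ((⟪e, d⟫)⁻¹ • d) := by
            rw [smul_smul, mul_inv_cancel₀ (ne_of_gt hed), one_smul]
          have h1 : ⟪astar, (⟪e, d⟫)⁻¹ • d⟫ = 0 := by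
            have h2 : ⟪astar, d⟫ = ⟪e, d⟫ * ⟪astar, (⟪e, d⟫)⁻¹ • d⟫ := by
              conv_lhs => rw [hdec]
              rw [real_inner_smul_right]
            rw [hzero] at h2
            rcases mul_eq_zero.mp h2.symm with h | h
            · exact absurd h (ne_of_gt hed)
            · exact h
          have hdds : (⟪e, d⟫)⁻¹ • d = ds := by
            by_contra hh
            have := hstrict _ hd'B hh
            rw [hvalB _ hd'B] at h1
            linarith
          refine ⟨⟪e, d⟫ * ‖ds‖, by positivity, ?_⟩
          rw [mul_smul, ← hysds, ← hdds, smul_smul, mul_inv_cancel₀ (ne_of_gt hed), one_smul]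
      · rintro ⟨r, hr, rfl⟩
        rw [real_inner_smul_right, hystar, real_inner_smul_right, hads]
        ring
  obtain ⟨i, hi⟩ := hucov ystar hExpo
  have h1 : ⟪xh, ystar⟫ ≤ 0 := by rw [← hi]; exact hxu i
  have h2 : ⟪xh, ystar⟫ = ‖ds‖⁻¹ * ⟪xh, ds⟫ := by
    rw [hystar, real_inner_smul_right]
  rw [h2] at h1
  have h3 : 0 < ‖ds‖⁻¹ * ⟪xh, ds⟫ := mul_pos (by positivity) hxds
  linarith


end IsotonePolarAux

open IsotonePolarAux in
/-- A generating wedge `W` in `ℝ^m` admits a `W`-isotone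
metric projection if and only if its polar `W^⊥` is the cone generated by
linearly independent vectors forming mutually non-acute angles. -/
theorem isotone_iff_polar_generated_by_nonacute (m : ℕ)
    (W : Set (EuclideanSpace ℝ (Fin m)))
    (hWne : W.Nonempty) (hWcl : IsClosed W)
    (hWadd : ∀ x ∈ W, ∀ y ∈ W, x + y ∈ W)
    (hWsmul : ∀ t : ℝ, 0 ≤ t → ∀ x ∈ W, t • x ∈ W)
    (hWgen : W - W = Set.univ)
    (PW : EuclideanSpace ℝ (Fin m) → EuclideanSpace ℝ (Fin m))
    (hPW : ∀ x, PW x ∈ W ∧ ∀ y ∈ W, ‖x - PW x‖ ≤ ‖x - y‖) :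
    (∀ u v : EuclideanSpace ℝ (Fin m), v - u ∈ W → PW v - PW u ∈ W) ↔
    (∃ (k : ℕ) (u : Fin k → EuclideanSpace ℝ (Fin m)),
      LinearIndependent ℝ u ∧
      (∀ i j : Fin k, i ≠ j → ⟪u i, u j⟫ ≤ 0) ∧
      {y | ∀ x ∈ W, ⟪x, y⟫ ≤ 0} =
        {y | ∃ t : Fin k → ℝ, (∀ i, 0 ≤ t i) ∧ y = ∑ i, t i • u i}) := by
  have hchar : ∀ x : EuclideanSpace ℝ (Fin m), (x - PW x) ∈ pol W ∧ ⟪x - PW x, PW x⟫ = 0 :=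
    proj_char hWadd hWsmul hWne hPW
  have hbip : ∀ x : EuclideanSpace ℝ (Fin m), (∀ y ∈ pol W, ⟪x, y⟫ ≤ 0) → x ∈ W :=
    fun x hx => mem_of_forall_pol hWadd hWsmul hWne hPW hx
  have hpuniq : ∀ x p : EuclideanSpace ℝ (Fin m), p ∈ W → x - p ∈ pol W → ⟪x - p, p⟫ = 0 → PW x = p :=
    fun x p h1 h2 h3 => proj_unique hPW h1 h2 h3
  constructor
  · intro hiso
    have hWconv : Convex ℝ W := by
      intro x hx y hy a b ha hb hab
      exact hWadd _ (hWsmul a ha x hx) _ (hWsmul b hb y hy)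
    have hpt : ∀ y ∈ pol W, -y ∈ pol W → y = 0 := pointed hWgen
    have hLI : ∀ {ι : Type} [Fintype ι] (v : ι → EuclideanSpace ℝ (Fin m)), (∀ i, v i ∈ pol W) →
        (∀ i, ‖v i‖ = 1) → (∀ i j, i ≠ j → ⟪v i, v j⟫ ≤ 0) → LinearIndependent ℝ v := by
      intro ι _ v h1 h2 h3
      exact obtuse_linearIndependent hpt (fun t ht y hy => pol_smul ht hy)
        (fun s f hf => sum_mem_pol s f hf) h1 h2 h3
    have hobt : ∀ y z : EuclideanSpace ℝ (Fin m), Expo W y → Expo W z → y ≠ z → ⟪y, z⟫ ≤ 0 := by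
      intro y z hy hz hne
      obtain ⟨hyD, hy1, a, haD, hay⟩ := hy
      obtain ⟨hzD, hz1, b, hbD, hbz⟩ := hz
      exact obtuse hWsmul hPW hbip hpuniq hiso hyD hy1 haD hay hzD hz1 hbD hbz hne
    obtain ⟨e, c, hc0, hec⟩ := exists_strict_pos hWconv hWne hWgen
    exact necessity hLI hobt hc0 hec
  · rintro ⟨k, u, hind, hob, hpol⟩
    intro a b hba
    exact sufficiency hPW hchar hbip hind hob hpol a b hba
end

section
/- Let W be the monotone wedge in ℝ^m, L = W ∩ (−W), and K = L^⊥ ∩ W. Then the metric projection P_K onto K is K-isotone: for all u, v ∈ L^⊥ with v − u ∈ K, one has P_K v − P_K u ∈ K. -/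
open scoped RealInnerProductSpace Pointwise
open Finset

private lemma aux_nonpos {c M e0 : ℝ} (he0 : 0 < e0)
    (h : ∀ e : ℝ, 0 < e → e ≤ e0 → c ≤ e * M) : c ≤ 0 := by
  by_contra hc
  push_neg at hc
  rcases le_or_gt M 0 with hM | hM
  · have := h e0 he0 le_rfl
    nlinarith
  · have hpos : (0:ℝ) < c / (2 * M) := by positivity
    have he : 0 < min e0 (c / (2 * M)) := lt_min he0 hpos
    have h1 := h _ he (min_le_left _ _)
    have h2 : min e0 (c / (2*M)) * M ≤ (c / (2*M)) * M :=
      mul_le_mul_of_nonneg_right (min_le_right _ _) hM.le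
    have h3 : (c / (2*M)) * M = c / 2 := by field_simp
    nlinarith

private lemma main_combin (m : ℕ) (u v a b : ℕ → ℝ)
    (ha : ∀ s t : ℕ, s ≤ t → t < m → a t ≤ a s)
    (hb : ∀ s t : ℕ, s ≤ t → t < m → b t ≤ b s)
    (hd : ∀ s t : ℕ, s ≤ t → t < m → v t - u t ≤ v s - u s)
    (hA : ∀ k, k ≤ m → ∑ t ∈ range k, u t ≤ ∑ t ∈ range k, a t)
    (hB : ∀ k, k ≤ m → ∑ t ∈ range k, v t ≤ ∑ t ∈ range k, b t)
    (hBm : ∑ t ∈ range m, b t = ∑ t ∈ range m, v t)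
    (hac : ∀ k, k + 1 < m → a (k+1) < a k →
      ∑ t ∈ range (k+1), a t = ∑ t ∈ range (k+1), u t)
    (hbc : ∀ k, k + 1 < m → b (k+1) < b k →
      ∑ t ∈ range (k+1), b t = ∑ t ∈ range (k+1), v t)
    {k : ℕ} (hk : k + 1 < m) :
    b (k+1) - a (k+1) ≤ b k - a k := by
  by_cases hcase : a (k+1) < a k
  swap
  · push_neg at hcase
    have h1 : a (k+1) ≤ a k := ha k (k+1) (Nat.le_succ k) hk
    have h2 : b (k+1) ≤ b k := hb k (k+1) (Nat.le_succ k) hk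
    linarith
  -- nontrivial case
  have hSa : ∑ t ∈ range (k+1), a t = ∑ t ∈ range (k+1), u t := hac k hk hcase
  -- Claim 1 : block start for b at k
  have claim1 : ∀ K : ℕ, K < m → ∃ i, i ≤ K ∧ (∀ t, i ≤ t → t ≤ K → b t = b K) ∧
      ∑ t ∈ range i, b t = ∑ t ∈ range i, v t := by
    intro K
    induction K with
    | zero =>
      intro _
      refine ⟨0, le_rfl, ?_, by simp⟩
      intro t h1 h2
      have : t = 0 := by omega
      rw [this]
    | succ K ih =>
      intro hK1
      by_cases hbe : b (K+1) = b K
      · obtain ⟨i, hiK, hconst, hSb⟩ := ih (by omega)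
        refine ⟨i, by omega, ?_, hSb⟩
        intro t h1 h2
        rcases Nat.lt_or_ge t (K+1) with ht | ht
        · rw [hconst t h1 (by omega), ← hbe]
        · have : t = K + 1 := by omega
          rw [this]
      · have hlt : b (K+1) < b K :=
          lt_of_le_of_ne (hb K (K+1) (Nat.le_succ K) hK1) hbe
        refine ⟨K+1, le_rfl, ?_, hbc K hK1 hlt⟩
        intro t h1 h2
        have : t = K + 1 := by omega
        rw [this]
  -- Claim 2 : block end for b at k+1
  have claim2 : ∀ n : ℕ, ∀ j : ℕ, j < m → m - 1 - j ≤ n →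
      ∃ j', j ≤ j' ∧ j' < m ∧ (∀ t, j ≤ t → t ≤ j' → b t = b j) ∧
      ∑ t ∈ range (j'+1), b t = ∑ t ∈ range (j'+1), v t := by
    intro n
    induction n with
    | zero =>
      intro j hj hmn
      have hjm : j + 1 = m := by omega
      refine ⟨j, le_rfl, hj, ?_, by rw [hjm]; exact hBm⟩
      intro t h1 h2
      have : t = j := by omega
      rw [this]
    | succ n ih =>
      intro j hj hmn
      by_cases hje : j + 1 < m
      · by_cases hbe : b (j+1) = b j
        · obtain ⟨j', h1, h2, h3, h4⟩ := ih (j+1) hje (by omega)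
          refine ⟨j', by omega, h2, ?_, h4⟩
          intro t ht1 ht2
          rcases Nat.lt_or_ge t (j+1) with ht | ht
          · have : t = j := by omega
            rw [this]
          · rw [h3 t ht ht2, hbe]
        · have hlt : b (j+1) < b j :=
            lt_of_le_of_ne (hb j (j+1) (Nat.le_succ j) hje) hbe
          refine ⟨j, le_rfl, hj, ?_, hbc j hje hlt⟩
          intro t h1 h2
          have : t = j := by omega
          rw [this]
      · have hjm : j + 1 = m := by omega
        refine ⟨j, le_rfl, hj, ?_, by rw [hjm]; exact hBm⟩
        intro t h1 h2
        have : t = j := by omega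
        rw [this]
  obtain ⟨i, hik, hbc1, hSbi⟩ := claim1 k (by omega)
  obtain ⟨j, hkj, hjm, hbc2, hSbj⟩ := claim2 m (k+1) hk (by omega)
  -- abbreviations
  have hik1 : i ≤ k + 1 := by omega
  have hkj1 : k + 1 ≤ j + 1 := by omega
  -- sums over Ico
  have e1 : ∑ t ∈ Ico i (k+1), b t = ((k+1-i : ℕ) : ℝ) * b k := by
    rw [Finset.sum_congr rfl (fun t ht => by
      have h := Finset.mem_Ico.mp ht
      exact hbc1 t h.1 (by omega))]
    rw [Finset.sum_const, Nat.card_Ico, nsmul_eq_mul]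
  have e2 : ∑ t ∈ Ico (k+1) (j+1), b t = ((j-k : ℕ) : ℝ) * b (k+1) := by
    rw [Finset.sum_congr rfl (fun t ht => by
      have h := Finset.mem_Ico.mp ht
      exact hbc2 t h.1 (by omega))]
    rw [Finset.sum_const, Nat.card_Ico, nsmul_eq_mul]
    congr 2
    omega
  have f1 : ∑ t ∈ Ico i (k+1), b t
      = ∑ t ∈ range (k+1), b t - ∑ t ∈ range i, b t := Finset.sum_Ico_eq_sub _ hik1
  have f2 : ∑ t ∈ Ico i (k+1), v t
      = ∑ t ∈ range (k+1), v t - ∑ t ∈ range i, v t := Finset.sum_Ico_eq_sub _ hik1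
  have f3 : ∑ t ∈ Ico i (k+1), u t
      = ∑ t ∈ range (k+1), u t - ∑ t ∈ range i, u t := Finset.sum_Ico_eq_sub _ hik1
  have f4 : ∑ t ∈ Ico i (k+1), a t
      = ∑ t ∈ range (k+1), a t - ∑ t ∈ range i, a t := Finset.sum_Ico_eq_sub _ hik1
  have g1 : ∑ t ∈ Ico (k+1) (j+1), b t
      = ∑ t ∈ range (j+1), b t - ∑ t ∈ range (k+1), b t := Finset.sum_Ico_eq_sub _ hkj1
  have g2 : ∑ t ∈ Ico (k+1) (j+1), v t
      = ∑ t ∈ range (j+1), v t - ∑ t ∈ range (k+1), v t := Finset.sum_Ico_eq_sub _ hkj1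
  have g3 : ∑ t ∈ Ico (k+1) (j+1), u t
      = ∑ t ∈ range (j+1), u t - ∑ t ∈ range (k+1), u t := Finset.sum_Ico_eq_sub _ hkj1
  have g4 : ∑ t ∈ Ico (k+1) (j+1), a t
      = ∑ t ∈ range (j+1), a t - ∑ t ∈ range (k+1), a t := Finset.sum_Ico_eq_sub _ hkj1
  -- pointwise bounds
  have hd1 : ((k+1-i:ℕ):ℝ) * (v k - u k) ≤ ∑ t ∈ Ico i (k+1), (v t - u t) := by
    have := Finset.card_nsmul_le_sum (Ico i (k+1)) (fun t => v t - u t) (v k - u k)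
      (fun t ht => by
        have h := Finset.mem_Ico.mp ht
        exact hd t k (by omega) (by omega))
    rwa [Nat.card_Ico, nsmul_eq_mul] at this
  have ha1 : ((k+1-i:ℕ):ℝ) * a k ≤ ∑ t ∈ Ico i (k+1), a t := by
    have := Finset.card_nsmul_le_sum (Ico i (k+1)) a (a k)
      (fun t ht => by
        have h := Finset.mem_Ico.mp ht
        exact ha t k (by omega) (by omega))
    rwa [Nat.card_Ico, nsmul_eq_mul] at this
  have hd2 : ∑ t ∈ Ico (k+1) (j+1), (v t - u t) ≤ ((j-k:ℕ):ℝ) * (v (k+1) - u (k+1)) := by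
    have := Finset.sum_le_card_nsmul (Ico (k+1) (j+1)) (fun t => v t - u t) (v (k+1) - u (k+1))
      (fun t ht => by
        have h := Finset.mem_Ico.mp ht
        exact hd (k+1) t (by omega) (by omega))
    rw [Nat.card_Ico, nsmul_eq_mul] at this
    have hjk : j + 1 - (k+1) = j - k := by omega
    rwa [hjk] at this
  have ha2 : ∑ t ∈ Ico (k+1) (j+1), a t ≤ ((j-k:ℕ):ℝ) * a (k+1) := by
    have := Finset.sum_le_card_nsmul (Ico (k+1) (j+1)) a (a (k+1))
      (fun t ht => by
        have h := Finset.mem_Ico.mp ht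
        exact ha (k+1) t (by omega) (by omega))
    rw [Nat.card_Ico, nsmul_eq_mul] at this
    have hjk : j + 1 - (k+1) = j - k := by omega
    rwa [hjk] at this
  have hsplit1 : ∑ t ∈ Ico i (k+1), v t
      = ∑ t ∈ Ico i (k+1), u t + ∑ t ∈ Ico i (k+1), (v t - u t) := by
    rw [← Finset.sum_add_distrib]
    exact Finset.sum_congr rfl (fun t _ => by ring)
  have hsplit2 : ∑ t ∈ Ico (k+1) (j+1), v t
      = ∑ t ∈ Ico (k+1) (j+1), u t + ∑ t ∈ Ico (k+1) (j+1), (v t - u t) := by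
    rw [← Finset.sum_add_distrib]
    exact Finset.sum_congr rfl (fun t _ => by ring)
  -- prefix-sum inequalities
  have hB1 : ∑ t ∈ range (k+1), v t ≤ ∑ t ∈ range (k+1), b t := hB (k+1) (by omega)
  have hAi : ∑ t ∈ range i, u t ≤ ∑ t ∈ range i, a t := hA i (by omega)
  have hAj : ∑ t ∈ range (j+1), u t ≤ ∑ t ∈ range (j+1), a t := hA (j+1) (by omega)
  -- left : b k ≥ a k + d k
  have hn1 : (0:ℝ) < ((k+1-i:ℕ):ℝ) := by
    have : 0 < k + 1 - i := by omega
    exact_mod_cast this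
  have hn2 : (0:ℝ) < ((j-k:ℕ):ℝ) := by
    have : 0 < j - k := by omega
    exact_mod_cast this
  have left : a k + (v k - u k) ≤ b k := by
    have chain : ((k+1-i:ℕ):ℝ) * (a k + (v k - u k)) ≤ ((k+1-i:ℕ):ℝ) * b k := by
      have hstep : ((k+1-i:ℕ):ℝ) * b k
          = ∑ t ∈ range (k+1), b t - ∑ t ∈ range i, v t := by
        rw [← e1, f1, hSbi]
      linarith [hd1, ha1, hB1, hAi, hsplit1, f2, f3, f4, hstep, hSa]
    exact le_of_mul_le_mul_left (by linarith [chain]) hn1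
  have right : b (k+1) ≤ a (k+1) + (v (k+1) - u (k+1)) := by
    have chain : ((j-k:ℕ):ℝ) * b (k+1) ≤ ((j-k:ℕ):ℝ) * (a (k+1) + (v (k+1) - u (k+1))) := by
      have hstep : ((j-k:ℕ):ℝ) * b (k+1)
          = ∑ t ∈ range (j+1), v t - ∑ t ∈ range (k+1), b t := by
        rw [← e2, g1, hSbj]
      linarith [hd2, ha2, hB1, hAj, hsplit2, g2, g3, g4, hstep, hSa]
    exact le_of_mul_le_mul_left (by linarith [chain]) hn2
  have hdk : v (k+1) - u (k+1) ≤ v k - u k := hd k (k+1) (Nat.le_succ k) hk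
  linarith

/-- For the monotone wedge `W` in `ℝ^m`, `L = W ∩ (-W)`,
and `K = L^⊥ ∩ W`, the metric projection `P_K` onto `K` (within `L^⊥`) is
`K`-isotone: if `u, v ∈ L^⊥` and `v - u ∈ K`, then `P_K v - P_K u ∈ K`. -/
theorem monotone_wedge_proj_K_isotone (m : ℕ)
    (W : Set (EuclideanSpace ℝ (Fin m)))
    (hW : W = {x | ∀ i j : Fin m, i ≤ j → x j ≤ x i})
    (L : Set (EuclideanSpace ℝ (Fin m))) (hL : L = W ∩ (-W))
    (Lperp : Set (EuclideanSpace ℝ (Fin m)))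
    (hLperp : Lperp = {y | ∀ x ∈ L, ⟪x, y⟫ = 0})
    (K : Set (EuclideanSpace ℝ (Fin m))) (hK : K = Lperp ∩ W)
    (PK : EuclideanSpace ℝ (Fin m) → EuclideanSpace ℝ (Fin m))
    (hPK : ∀ x ∈ Lperp, PK x ∈ K ∧ ∀ y ∈ K, ‖x - PK x‖ ≤ ‖x - y‖) :
    ∀ u ∈ Lperp, ∀ v ∈ Lperp, v - u ∈ K → PK v - PK u ∈ K := by
  -- basic membership lemmas
  have memW : ∀ x : EuclideanSpace ℝ (Fin m), x ∈ W ↔ ∀ i j : Fin m, i ≤ j → x j ≤ x i := by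
    intro x; rw [hW]; exact Iff.rfl
  have memK : ∀ x : EuclideanSpace ℝ (Fin m), x ∈ K ↔ x ∈ Lperp ∧ x ∈ W := by
    intro x; rw [hK]; exact Iff.rfl
  have memLperp : ∀ y : EuclideanSpace ℝ (Fin m),
      y ∈ Lperp ↔ ∀ x ∈ L, ⟪x, y⟫ = 0 := by
    intro y; rw [hLperp]; exact Iff.rfl
  have hinner : ∀ x y : EuclideanSpace ℝ (Fin m), ⟪x, y⟫ = ∑ t : Fin m, x t * y t := by
    intro x y; simp [PiLp.inner_apply, RCLike.inner_apply, conj_trivial]; exact Finset.sum_congr rfl (fun _ _ => mul_comm _ _)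
  -- Lperp is exactly the sum-zero hyperplane
  have hones : (WithLp.toLp 2 (fun _ => (1:ℝ)) : EuclideanSpace ℝ (Fin m)) ∈ L := by
    rw [hL]
    constructor
    · rw [memW]; intro i j _; exact le_rfl
    · rw [Set.mem_neg, memW]; intro i j _; exact le_rfl
  have hsum0 : ∀ y ∈ Lperp, ∑ t : Fin m, y t = 0 := by
    intro y hy
    have h := (memLperp y).mp hy _ hones
    rw [hinner] at h
    simpa using h
  have hperp : ∀ y : EuclideanSpace ℝ (Fin m), (∑ t : Fin m, y t) = 0 → y ∈ Lperp := by
    intro y hy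
    rw [memLperp]
    intro x hx
    rw [hL] at hx
    have hxW := (memW x).mp hx.1
    have hxW' : ∀ i j : Fin m, i ≤ j → x i ≤ x j := by
      intro i j hij
      have := (memW (-x)).mp (Set.mem_neg.mp hx.2) i j hij
      simp only [PiLp.neg_apply] at this
      linarith
    have hconst : ∀ p q : Fin m, x p = x q := by
      intro p q
      rcases le_total p q with h | h
      · exact le_antisymm (hxW' p q h) (hxW p q h)
      · exact le_antisymm (hxW q p h) (hxW' q p h)
    rw [hinner]
    rcases Nat.eq_zero_or_pos m with hm | hm
    · subst hm; simp
    · have i0 : Fin m := ⟨0, hm⟩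
      calc ∑ t : Fin m, x t * y t = ∑ t : Fin m, x i0 * y t :=
            Finset.sum_congr rfl (fun t _ => by rw [hconst t i0])
        _ = x i0 * ∑ t : Fin m, y t := by rw [Finset.mul_sum]
        _ = 0 := by rw [hy, mul_zero]
  -- extension of coordinates to ℕ
  set F : EuclideanSpace ℝ (Fin m) → ℕ → ℝ :=
    fun x t => if h : t < m then x ⟨t, h⟩ else 0 with hF
  have hFlt : ∀ (x : EuclideanSpace ℝ (Fin m)) (t : ℕ) (h : t < m), F x t = x ⟨t, h⟩ := by
    intro x t h; simp [hF, h]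
  have hFsum : ∀ x : EuclideanSpace ℝ (Fin m), ∑ t ∈ range m, F x t = ∑ t : Fin m, x t := by
    intro x
    rw [← Fin.sum_univ_eq_sum_range (fun t => F x t) m]
    exact Finset.sum_congr rfl (fun t _ => by simp [hF, t.isLt])
  have hFsub : ∀ (x y : EuclideanSpace ℝ (Fin m)) (t : ℕ),
      F (x - y) t = F x t - F y t := by
    intro x y t
    by_cases h : t < m
    · simp [hF, h, PiLp.sub_apply]
    · simp [hF, h]
  -- monotone from adjacent comparisons
  have hadj : ∀ x : EuclideanSpace ℝ (Fin m),
      (∀ t : ℕ, (h : t + 1 < m) → x ⟨t+1, h⟩ ≤ x ⟨t, by omega⟩) →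
      ∀ i j : Fin m, i ≤ j → x j ≤ x i := by
    intro x hx i j hij
    have key : ∀ n p : ℕ, (hp : p + n < m) → x ⟨p + n, hp⟩ ≤ x ⟨p, by omega⟩ := by
      intro n
      induction n with
      | zero => intro p hp; exact le_rfl
      | succ n ih =>
        intro p hp
        have h1 : x ⟨p + (n+1), hp⟩ ≤ x ⟨p + n, by omega⟩ := hx (p + n) (by omega)
        exact le_trans h1 (ih p (by omega))
    have hij' : (i : ℕ) ≤ (j : ℕ) := hij
    have h := key ((j : ℕ) - (i : ℕ)) (i : ℕ) (by omega)
    have e1 : (⟨(i : ℕ) + ((j : ℕ) - (i : ℕ)), by omega⟩ : Fin m) = j := by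
      apply Fin.ext; simp; omega
    have e2 : (⟨(i : ℕ), by omega⟩ : Fin m) = i := Fin.ext rfl
    rwa [e1, e2] at h
  -- algebraic closure of K
  have hKadd : ∀ x y : EuclideanSpace ℝ (Fin m), x ∈ K → y ∈ K → x + y ∈ K := by
    intro x y hx hy
    rw [memK] at hx hy ⊢
    constructor
    · rw [memLperp]
      intro z hz
      rw [inner_add_right, (memLperp x).mp hx.1 z hz, (memLperp y).mp hy.1 z hz, add_zero]
    · rw [memW]
      intro i j hij
      have h1 := (memW x).mp hx.2 i j hij
      have h2 := (memW y).mp hy.2 i j hij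
      simp only [PiLp.add_apply]
      linarith
  have hKsmul : ∀ (c : ℝ) (x : EuclideanSpace ℝ (Fin m)), 0 ≤ c → x ∈ K → c • x ∈ K := by
    intro c x hc hx
    rw [memK] at hx ⊢
    constructor
    · rw [memLperp]
      intro z hz
      rw [real_inner_smul_right, (memLperp x).mp hx.1 z hz, mul_zero]
    · rw [memW]
      intro i j hij
      have h1 := (memW x).mp hx.2 i j hij
      simp only [PiLp.smul_apply, smul_eq_mul]
      exact mul_le_mul_of_nonneg_left h1 hc
  -- variational inequality
  have hvar : ∀ w p z : EuclideanSpace ℝ (Fin m),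
      (∀ y ∈ K, ‖w - p‖ ≤ ‖w - y‖) → ∀ ε0 : ℝ, 0 < ε0 →
      (∀ ε : ℝ, 0 < ε → ε ≤ ε0 → p + ε • z ∈ K) → ⟪w - p, z⟫ ≤ 0 := by
    intro w p z hmin ε0 hε0 hmem
    apply aux_nonpos (M := ‖z‖^2 / 2) hε0
    intro ε hε hεe
    have h1 := hmin _ (hmem ε hε hεe)
    rw [sub_add_eq_sub_sub] at h1
    have h3 : ‖w - p‖^2 ≤ ‖(w - p) - ε • z‖^2 := pow_le_pow_left₀ (norm_nonneg _) h1 2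
    have h4 : ‖(w - p) - ε • z‖^2
        = ‖w - p‖^2 - 2 * (ε * ⟪w - p, z⟫) + ε^2 * ‖z‖^2 := by
      rw [norm_sub_sq_real, real_inner_smul_right, norm_smul, Real.norm_eq_abs,
        mul_pow, sq_abs]
    nlinarith [h3, h4, hε]
    -- ==================== main argument ====================
  intro u hu v hv hd
  obtain ⟨haK, haMin⟩ := hPK u hu
  obtain ⟨hbK, hbMin⟩ := hPK v hv
  have haLperp := ((memK (PK u)).mp haK).1
  have haW := ((memK (PK u)).mp haK).2
  have hbLperp := ((memK (PK v)).mp hbK).1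
  have hbW := ((memK (PK v)).mp hbK).2
  -- test vectors
  set Z : ℕ → EuclideanSpace ℝ (Fin m) :=
    fun kk => WithLp.toLp 2 (fun t => if (t : ℕ) ≤ kk then ((m:ℝ) - (kk+1)) else -((kk:ℝ)+1)) with hZ
  have hZval : ∀ (kk : ℕ) (t : Fin m),
      Z kk t = if (t : ℕ) ≤ kk then ((m:ℝ) - (kk+1)) else -((kk:ℝ)+1) := fun kk t => rfl
  have hZsum : ∀ kk : ℕ, kk + 1 < m → ∑ t : Fin m, Z kk t = 0 := by
    intro kk hkk
    have h1 : ∑ t : Fin m, Z kk t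
        = ∑ t ∈ range m, (if t ≤ kk then ((m:ℝ) - (kk+1)) else -((kk:ℝ)+1)) :=
      Fin.sum_univ_eq_sum_range (fun t => if t ≤ kk then ((m:ℝ) - (kk+1)) else -((kk:ℝ)+1)) m
    have h2 : ∑ t ∈ Ico 0 (kk+1), (if t ≤ kk then ((m:ℝ) - (kk+1)) else -((kk:ℝ)+1))
        = (kk+1 : ℕ) • ((m:ℝ) - (kk+1)) := by
      rw [Finset.sum_congr rfl
        (fun t ht => if_pos (by have := Finset.mem_Ico.mp ht; omega)),
        Finset.sum_const, Nat.card_Ico, Nat.sub_zero]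
    have h3 : ∑ t ∈ Ico (kk+1) m, (if t ≤ kk then ((m:ℝ) - (kk+1)) else -((kk:ℝ)+1))
        = (m - (kk+1) : ℕ) • (-((kk:ℝ)+1)) := by
      rw [Finset.sum_congr rfl
        (fun t ht => if_neg (by have := Finset.mem_Ico.mp ht; omega)),
        Finset.sum_const, Nat.card_Ico]
    rw [h1, range_eq_Ico,
      ← Finset.sum_Ico_consecutive _ (Nat.zero_le (kk+1)) (by omega : kk+1 ≤ m), h2, h3]
    have hc : ((m - (kk+1) : ℕ) : ℝ) = (m:ℝ) - ((kk:ℝ)+1) := by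
      rw [Nat.cast_sub (by omega : kk+1 ≤ m)]; push_cast; ring
    rw [nsmul_eq_mul, nsmul_eq_mul, hc]
    push_cast
    ring
  have hZinner : ∀ kk : ℕ, kk + 1 < m → ∀ w : EuclideanSpace ℝ (Fin m),
      (∑ t : Fin m, w t = 0) →
      ⟪w, Z kk⟫ = (m:ℝ) * ∑ t ∈ range (kk+1), F w t := by
    intro kk hkk w hw
    rw [hinner]
    have h1 : ∑ t : Fin m, w t * Z kk t
        = ∑ t ∈ range m, (F w t * (if t ≤ kk then ((m:ℝ) - (kk+1)) else -((kk:ℝ)+1))) := by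
      rw [← Fin.sum_univ_eq_sum_range
        (fun t => F w t * (if t ≤ kk then ((m:ℝ) - (kk+1)) else -((kk:ℝ)+1))) m]
      refine Finset.sum_congr rfl (fun t _ => ?_)
      rw [hFlt w t t.isLt]
    have hT : ∑ t ∈ range m, F w t = 0 := by rw [hFsum w]; exact hw
    have hsub : ∑ t ∈ Ico (kk+1) m, F w t
        = 0 - ∑ t ∈ range (kk+1), F w t := by
      rw [← hT]
      exact Finset.sum_Ico_eq_sub _ (by omega)
    have h2 : ∑ t ∈ Ico 0 (kk+1), (F w t * (if t ≤ kk then ((m:ℝ) - (kk+1)) else -((kk:ℝ)+1)))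
        = ((m:ℝ) - (kk+1)) * ∑ t ∈ range (kk+1), F w t := by
      rw [Finset.sum_congr rfl
        (fun t ht => by rw [if_pos (by have := Finset.mem_Ico.mp ht; omega)]),
        Finset.mul_sum, range_eq_Ico]
      exact Finset.sum_congr rfl (fun t _ => by ring)
    have h3 : ∑ t ∈ Ico (kk+1) m, (F w t * (if t ≤ kk then ((m:ℝ) - (kk+1)) else -((kk:ℝ)+1)))
        = (-((kk:ℝ)+1)) * (0 - ∑ t ∈ range (kk+1), F w t) := by
      rw [Finset.sum_congr rfl
        (fun t ht => by rw [if_neg (by have := Finset.mem_Ico.mp ht; omega)]),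
        ← hsub, Finset.mul_sum]
      exact Finset.sum_congr rfl (fun t _ => by ring)
    rw [h1, range_eq_Ico,
      ← Finset.sum_Ico_consecutive _ (Nat.zero_le (kk+1)) (by omega : kk+1 ≤ m), h2, h3,
      range_eq_Ico]
    ring
  have hZW : ∀ kk : ℕ, kk + 1 < m → Z kk ∈ W := by
    intro kk hkk
    rw [memW]
    intro i j hij
    have hm' : ((kk:ℝ)+1) < (m:ℝ) := by exact_mod_cast hkk
    have hij' : (i : ℕ) ≤ (j : ℕ) := hij
    by_cases h1 : (j : ℕ) ≤ kk
    · rw [hZval, hZval, if_pos h1, if_pos (by omega : (i:ℕ) ≤ kk)]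
    · by_cases h2 : (i : ℕ) ≤ kk
      · rw [hZval, hZval, if_neg h1, if_pos h2]; linarith
      · rw [hZval, hZval, if_neg h1, if_neg h2]
  have hZK : ∀ kk : ℕ, kk + 1 < m → Z kk ∈ K :=
    fun kk h => (memK _).mpr ⟨hperp _ (hZsum kk h), hZW kk h⟩
  -- prefix inequalities and complementarity for projections
  have hproj : ∀ w : EuclideanSpace ℝ (Fin m), w ∈ Lperp →
      (∀ kk : ℕ, kk + 1 < m →
        ∑ t ∈ range (kk+1), F w t ≤ ∑ t ∈ range (kk+1), F (PK w) t) ∧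
      (∀ kk : ℕ, (h : kk + 1 < m) → F (PK w) (kk+1) < F (PK w) kk →
        ∑ t ∈ range (kk+1), F (PK w) t = ∑ t ∈ range (kk+1), F w t) := by
    intro w hw
    obtain ⟨hpK, hpMin⟩ := hPK w hw
    have hpLperp := ((memK (PK w)).mp hpK).1
    have hpW := ((memK (PK w)).mp hpK).2
    have hwp_sum : ∑ t : Fin m, (w - PK w) t = 0 := by
      simp only [PiLp.sub_apply, Finset.sum_sub_distrib]
      rw [hsum0 w hw, hsum0 _ hpLperp, sub_zero]
    have hinnerZ : ∀ kk : ℕ, kk + 1 < m → ⟪w - PK w, Z kk⟫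
        = (m:ℝ) * (∑ t ∈ range (kk+1), F w t - ∑ t ∈ range (kk+1), F (PK w) t) := by
      intro kk hkk
      rw [hZinner kk hkk (w - PK w) hwp_sum]
      congr 1
      rw [Finset.sum_congr rfl (fun t _ => hFsub w (PK w) t), Finset.sum_sub_distrib]
    have hfwd : ∀ kk : ℕ, kk + 1 < m →
        ∑ t ∈ range (kk+1), F w t ≤ ∑ t ∈ range (kk+1), F (PK w) t := by
      intro kk hkk
      have h1 : ⟪w - PK w, Z kk⟫ ≤ 0 := by
        apply hvar w (PK w) (Z kk) hpMin 1 one_pos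
        intro ε hε _
        exact hKadd _ _ hpK (hKsmul ε _ hε.le (hZK kk hkk))
      rw [hinnerZ kk hkk] at h1
      have hm0 : (0:ℝ) < (m:ℝ) := by exact_mod_cast (by omega : 0 < m)
      nlinarith [h1, hm0]
    refine ⟨hfwd, ?_⟩
    intro kk hkk hdrop
    have hm0 : (0:ℝ) < (m:ℝ) := by exact_mod_cast (by omega : 0 < m)
    have hgap : 0 < PK w ⟨kk, by omega⟩ - PK w ⟨kk+1, hkk⟩ := by
      rw [hFlt _ (kk+1) hkk, hFlt _ kk (by omega)] at hdrop
      linarith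
    have h1 : ⟪w - PK w, -(Z kk)⟫ ≤ 0 := by
      apply hvar w (PK w) (-(Z kk)) hpMin
        ((PK w ⟨kk, by omega⟩ - PK w ⟨kk+1, hkk⟩) / m) (by positivity)
      intro ε hε hεe
      rw [memK]
      constructor
      · apply hperp
        have hcoord : ∀ t : Fin m, (PK w + ε • -(Z kk)) t = PK w t + ε * (-(Z kk t)) := by
          intro t
          simp [PiLp.add_apply, PiLp.smul_apply, PiLp.neg_apply, smul_eq_mul]
        rw [Finset.sum_congr rfl (fun t _ => hcoord t), Finset.sum_add_distrib,
          hsum0 _ hpLperp]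
        have : ∑ t : Fin m, ε * (-(Z kk t)) = ε * (- ∑ t : Fin m, Z kk t) := by
          rw [← Finset.sum_neg_distrib, Finset.mul_sum]
        rw [this, hZsum kk hkk]
        ring
      · rw [memW]
        apply hadj
        intro t ht
        have hεm : ε * m ≤ PK w ⟨kk, by omega⟩ - PK w ⟨kk+1, hkk⟩ :=
          (le_div_iff₀ hm0).mp hεe
        have hpm : PK w ⟨t+1, ht⟩ ≤ PK w ⟨t, by omega⟩ :=
          (memW _).mp hpW ⟨t, by omega⟩ ⟨t+1, ht⟩ (by exact Nat.le_succ t)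
        simp only [PiLp.add_apply, PiLp.smul_apply, PiLp.neg_apply, smul_eq_mul]
        rw [hZval, hZval]
        simp only [Fin.val_mk]
        by_cases h1 : t + 1 ≤ kk
        · rw [if_pos h1, if_pos (by omega : t ≤ kk)]
          linarith
        · by_cases h2 : t ≤ kk
          · have htk : t = kk := by omega
            subst htk
            rw [if_neg (by omega : ¬ (t + 1 ≤ t)), if_pos (le_refl t)]
            have hεm' : ε * (m:ℝ) ≤ PK w ⟨t, by omega⟩ - PK w ⟨t+1, ht⟩ := hεm
            linarith [hεm']
          · rw [if_neg (by omega : ¬ (t + 1 ≤ kk)), if_neg h2]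
            linarith
    rw [inner_neg_right, hinnerZ kk hkk] at h1
    have h2 := hfwd kk hkk
    nlinarith [h1, h2, hm0]
  -- apply the combinatorial lemma
  have hdW := ((memK _).mp hd).2
  have hdLperp := ((memK _).mp hd).1
  have key : ∀ k : ℕ, k + 1 < m →
      F (PK v) (k+1) - F (PK u) (k+1) ≤ F (PK v) k - F (PK u) k := by
    intro k hk
    apply main_combin m (F u) (F v) (F (PK u)) (F (PK v))
    · intro s t hst ht
      rw [hFlt _ t ht, hFlt _ s (by omega)]
      exact (memW _).mp haW ⟨s, by omega⟩ ⟨t, ht⟩ (by exact hst)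
    · intro s t hst ht
      rw [hFlt _ t ht, hFlt _ s (by omega)]
      exact (memW _).mp hbW ⟨s, by omega⟩ ⟨t, ht⟩ (by exact hst)
    · intro s t hst ht
      have h := (memW _).mp hdW ⟨s, by omega⟩ ⟨t, ht⟩ (by exact hst)
      simp only [PiLp.sub_apply] at h
      rw [hFlt _ t ht, hFlt _ s (by omega), hFlt _ t ht, hFlt _ s (by omega)]
      exact h
    · intro k' hk'
      rcases Nat.eq_zero_or_pos k' with h0 | h0
      · subst h0; simp
      · rcases eq_or_lt_of_le hk' with hm' | hm'
        · subst hm'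
          rw [hFsum, hFsum, hsum0 u hu, hsum0 _ haLperp]
        · have he : k' - 1 + 1 = k' := by omega
          have := (hproj u hu).1 (k' - 1) (by omega)
          rwa [he] at this
    · intro k' hk'
      rcases Nat.eq_zero_or_pos k' with h0 | h0
      · subst h0; simp
      · rcases eq_or_lt_of_le hk' with hm' | hm'
        · subst hm'
          rw [hFsum, hFsum, hsum0 v hv, hsum0 _ hbLperp]
        · have he : k' - 1 + 1 = k' := by omega
          have := (hproj v hv).1 (k' - 1) (by omega)
          rwa [he] at this
    · rw [hFsum, hFsum, hsum0 v hv, hsum0 _ hbLperp]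
    · exact fun k' h1 h2 => (hproj u hu).2 k' h1 h2
    · exact fun k' h1 h2 => (hproj v hv).2 k' h1 h2
    · exact hk
  -- conclude
  rw [memK]
  constructor
  · rw [memLperp]
    intro x hx
    rw [inner_sub_right, (memLperp _).mp hbLperp x hx, (memLperp _).mp haLperp x hx,
      sub_zero]
  · rw [memW]
    apply hadj
    intro t ht
    have h := key t ht
    rw [hFlt _ (t+1) ht, hFlt _ (t+1) ht, hFlt _ t (by omega), hFlt _ t (by omega)] at h
    simp only [PiLp.sub_apply]
    linarith
end

section
/- Let W = {x ∈ ℝ^m : x^1 ≥ x^2 ≥ ⋯ ≥ x^m} be the monotone wedge. Then the metric projection P_W onto W is W-isotone: for all u, v ∈ ℝ^m with v − u ∈ W (i.e., the coordinates of v − u are non-increasing), one has P_W v − P_W u ∈ W. -/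
open Finset

private lemma lcp_compare (m : ℕ) (F G du dv dp dq : ℕ → ℝ)
    (hF0 : F 0 = 0) (hFm : F m = 0) (hG0 : G 0 = 0) (hGm : G m = 0)
    (hFpos : ∀ k, k ≤ m → 0 ≤ F k) (hGpos : ∀ k, k ≤ m → 0 ≤ G k)
    (hLp : ∀ k, 1 ≤ k → k < m → dp k = du k + 2*F k - F (k-1) - F (k+1))
    (hLq : ∀ k, 1 ≤ k → k < m → dq k = dv k + 2*G k - G (k-1) - G (k+1))
    (hcompF : ∀ k, 1 ≤ k → k < m → 0 < F k → dp k = 0)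
    (hcompG : ∀ k, 1 ≤ k → k < m → 0 < G k → dq k = 0)
    (hdp : ∀ k, 1 ≤ k → k < m → 0 ≤ dp k)
    (hdq : ∀ k, 1 ≤ k → k < m → 0 ≤ dq k)
    (hduv : ∀ k, 1 ≤ k → k < m → du k ≤ dv k) :
    ∀ k, 1 ≤ k → k < m → dp k ≤ dq k := by
  -- Step A: G ≤ F on [0, m]
  have hGF : ∀ k, k ≤ m → G k ≤ F k := by
    by_contra hcon
    push_neg at hcon
    set w : ℕ → ℝ := fun k => G k - F k with hw
    have hkey : ∀ k, 1 ≤ k → k < m → 0 < w k → 2 * w k ≤ w (k-1) + w (k+1) := by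
      intro k hk1 hk2 hwk
      have hFk := hFpos k (le_of_lt hk2)
      have hGk : 0 < G k := by simp only [hw] at hwk; linarith
      have h1 := hcompG k hk1 hk2 hGk
      have h2 := hLq k hk1 hk2
      have h3 := hLp k hk1 hk2
      have h4 := hdp k hk1 hk2
      have h5 := hduv k hk1 hk2
      simp only [hw]
      linarith
    have hP : ∃ j, j ≤ m ∧ 0 < w j := by
      obtain ⟨j, hj1, hj2⟩ := hcon
      exact ⟨j, hj1, by simp only [hw]; linarith⟩
    classical
    let j := Nat.find hP
    obtain ⟨hjm, hjpos⟩ : j ≤ m ∧ 0 < w j := Nat.find_spec hP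
    have hmin : ∀ i, i < j → w i ≤ 0 := by
      intro i hi
      by_contra hcon2
      push_neg at hcon2
      exact Nat.find_min hP hi ⟨le_trans (le_of_lt hi) hjm, hcon2⟩
    have hj1 : 1 ≤ j := by
      rcases Nat.eq_zero_or_pos j with h | h
      · exfalso; rw [h] at hjpos; simp only [hw, hG0, hF0] at hjpos; linarith
      · exact h
    have hwm : w m = 0 := by simp only [hw, hGm, hFm]; ring
    have hjltm : j < m := by
      rcases lt_or_eq_of_le hjm with h | h
      · exact h
      · exfalso; rw [h] at hjpos; linarith
    set δ := w j - w (j-1) with hδ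
    have hδpos : 0 < δ := by
      have := hmin (j-1) (by omega)
      simp only [hδ]; linarith
    have main : ∀ n, j + n ≤ m → w j ≤ w (j + n) ∧ δ ≤ w (j + n) - w (j + n - 1) := by
      intro n
      induction n with
      | zero => intro _; constructor
                · simp
                · simp only [Nat.add_zero, hδ]; exact le_refl _
      | succ n ih =>
        intro hn
        have hkm : j + n ≤ m := by omega
        obtain ⟨ih1, ih2⟩ := ih hkm
        have hk1 : 1 ≤ j + n := by omega
        have hk2 : j + n < m := by omega
        have hwk : 0 < w (j + n) := lt_of_lt_of_le hjpos ih1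
        have := hkey (j + n) hk1 hk2 hwk
        have e1 : j + (n+1) = (j+n) + 1 := by omega
        have e2 : j + (n+1) - 1 = j + n := by omega
        rw [e1]
        rw [show j + n + 1 - 1 = j + n by omega]
        constructor
        · linarith
        · linarith
    have := (main (m - j) (by omega)).1
    rw [show j + (m - j) = m by omega] at this
    rw [hwm] at this
    linarith
  -- Step B
  intro k hk1 hk2
  rcases eq_or_lt_of_le (hFpos k (le_of_lt hk2)) with hF | hF
  · -- F k = 0, hence G k = 0
    have hGk : G k = 0 := le_antisymm (by have := hGF k (le_of_lt hk2); linarith) (hGpos k (le_of_lt hk2))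
    have h2 := hLq k hk1 hk2
    have h3 := hLp k hk1 hk2
    have h5 := hduv k hk1 hk2
    have h6 := hGF (k-1) (by omega)
    have h7 := hGF (k+1) (by omega)
    rw [h2, h3, ← hF, hGk]
    linarith
  · have := hcompF k hk1 hk2 hF
    rw [this]
    exact hdq k hk1 hk2

open Finset

private def Ee (m : ℕ) (x : EuclideanSpace ℝ (Fin m)) (i : ℕ) : ℝ :=
  if h : i < m then x ⟨i, h⟩ else 0

private def cvec (m K : ℕ) : EuclideanSpace ℝ (Fin m) :=
  WithLp.toLp 2 (fun i => if (i : ℕ) < K then 1 else 0)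

private lemma inner_cvec (m : ℕ) (x r : EuclideanSpace ℝ (Fin m)) (K : ℕ) (hK : K ≤ m) :
    inner ℝ (x - r) (cvec m K) = ∑ i ∈ Finset.range K, (Ee m x i - Ee m r i) := by
  have h1 : inner ℝ (x - r) (cvec m K) = ∑ i : Fin m, ((x i - r i) * (cvec m K i)) := by
    simp [PiLp.inner_apply, RCLike.inner_apply, mul_comm, PiLp.sub_apply]
  set g : ℕ → ℝ := fun n => if h : n < m then (if n < K then x ⟨n, h⟩ - r ⟨n, h⟩ else 0) else 0
    with hg
  have h2 : ∑ i : Fin m, ((x i - r i) * (cvec m K i)) = ∑ i : Fin m, g (i : ℕ) := by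
    apply Finset.sum_congr rfl
    intro i _
    simp only [hg, cvec, PiLp.toLp_apply, dif_pos i.2, Fin.eta, mul_ite, mul_one, mul_zero]
  have h3 : ∑ i : Fin m, g (i : ℕ) = ∑ i ∈ Finset.range m, g i :=
    Fin.sum_univ_eq_sum_range g m
  have h4 : ∑ i ∈ Finset.range m, g i = ∑ i ∈ Finset.range K, g i := by
    refine (Finset.sum_subset (Finset.range_subset_range.2 hK) ?_).symm
    intro n hn hnK
    simp only [Finset.mem_range] at hn hnK
    simp only [hg, dif_pos hn, if_neg hnK]
  have h5 : ∑ i ∈ Finset.range K, g i = ∑ i ∈ Finset.range K, (Ee m x i - Ee m r i) := by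
    apply Finset.sum_congr rfl
    intro n hn
    simp only [Finset.mem_range] at hn
    simp only [hg, Ee, dif_pos (lt_of_lt_of_le hn hK), if_pos hn]
  rw [h1, h2, h3, h4, h5]

private lemma proj_var (m : ℕ) (W : Set (EuclideanSpace ℝ (Fin m)))
    (hW : W = {x | ∀ i j : Fin m, i ≤ j → x j ≤ x i})
    (x p : EuclideanSpace ℝ (Fin m)) (hp : p ∈ W)
    (hmin : ∀ y ∈ W, ‖x - p‖ ≤ ‖x - y‖)
    (h : EuclideanSpace ℝ (Fin m)) (hh : p + h ∈ W) :
    inner ℝ (x - p) h ≤ (0:ℝ) := by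
  have key : ∀ t : ℝ, 0 < t → t ≤ 1 → inner ℝ (x - p) h ≤ t / 2 * ‖h‖^2 := by
    intro t ht0' ht1
    have ht0 : 0 ≤ t := le_of_lt ht0'
    have hmem : p + t • h ∈ W := by
      rw [hW] at hp hh ⊢
      intro i j hij
      have h1 := hp i j hij
      have h2 := hh i j hij
      simp only [PiLp.add_apply, PiLp.smul_apply, smul_eq_mul] at h2 ⊢
      nlinarith [mul_le_mul_of_nonneg_left (by linarith [h2] : p j + h j ≤ p i + h i) ht0]
    have hle := hmin _ hmem
    have hsq : ‖x - p‖^2 ≤ ‖x - (p + t • h)‖^2 := by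
      apply pow_le_pow_left₀ (norm_nonneg _) hle
    have e : x - (p + t • h) = (x - p) - t • h := by abel
    have expand : ‖(x - p) - t • h‖^2
        = ‖x - p‖^2 - 2 * (t * inner ℝ (x - p) h) + t^2 * ‖h‖^2 := by
      rw [norm_sub_sq_real, real_inner_smul_right, norm_smul]
      simp only [Real.norm_eq_abs, mul_pow, sq_abs]
    rw [e, expand] at hsq
    have h2 : inner ℝ (x - p) h ≤ t / 2 * ‖h‖ ^2 := by
      rw [div_mul_eq_mul_div, le_div_iff₀ (by norm_num : (0:ℝ) < 2)]
      nlinarith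
    exact h2
  by_contra hcon
  push_neg at hcon
  set c : ℝ := inner ℝ (x - p) h with hc
  have hnorm : 0 < ‖h‖^2 := by
    rcases eq_or_lt_of_le (norm_nonneg h) with h0 | h0
    · exfalso
      have hz : h = 0 := by rwa [eq_comm, norm_eq_zero] at h0
      rw [hz, inner_zero_right] at hc
      linarith
    · positivity
  have ht := key (min 1 (c / ‖h‖^2)) (lt_min one_pos (by positivity)) (min_le_left _ _)
  have h1 : min 1 (c / ‖h‖^2) / 2 * ‖h‖^2 ≤ (c / ‖h‖^2) / 2 * ‖h‖^2 := by
    apply mul_le_mul_of_nonneg_right _ (le_of_lt hnorm)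
    apply div_le_div_of_nonneg_right (min_le_right _ _) (by norm_num)
  have h2 : (c / ‖h‖^2) / 2 * ‖h‖^2 = c / 2 := by
    rw [div_div, div_mul_eq_mul_div, mul_comm (‖h‖^2) 2, mul_div_mul_right c 2 hnorm.ne']
  rw [h2] at h1
  have := le_trans ht h1
  linarith

private lemma proj_facts (m : ℕ) (W : Set (EuclideanSpace ℝ (Fin m)))
    (hW : W = {x | ∀ i j : Fin m, i ≤ j → x j ≤ x i})
    (x r : EuclideanSpace ℝ (Fin m)) (hr : r ∈ W)
    (hmin : ∀ y ∈ W, ‖x - r‖ ≤ ‖x - y‖) :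
    (∀ k, k ≤ m → 0 ≤ ∑ i ∈ Finset.range k, (Ee m r i - Ee m x i)) ∧
    (∑ i ∈ Finset.range m, (Ee m r i - Ee m x i)) = 0 ∧
    (∀ k, 1 ≤ k → k < m →
      0 < ∑ i ∈ Finset.range k, (Ee m r i - Ee m x i) → Ee m r (k-1) - Ee m r k = 0) := by
  have hr' : ∀ i j : Fin m, i ≤ j → r j ≤ r i := by rw [hW] at hr; exact hr
  have sumneg : ∀ K, K ≤ m → ∑ i ∈ Finset.range K, (Ee m r i - Ee m x i)
      = - inner ℝ (x - r) (cvec m K) := by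
    intro K hK
    rw [inner_cvec m x r K hK]
    rw [← Finset.sum_neg_distrib]
    apply Finset.sum_congr rfl
    intro i _; ring
  -- fact 1 : F K ≥ 0
  have fact1 : ∀ k, k ≤ m → 0 ≤ ∑ i ∈ Finset.range k, (Ee m r i - Ee m x i) := by
    intro K hK
    have hmem : r + cvec m K ∈ W := by
      rw [hW]
      intro i j hij
      have h1 := hr' i j hij
      have h2 : (if (j : ℕ) < K then (1:ℝ) else 0) ≤ (if (i : ℕ) < K then (1:ℝ) else 0) := by
        have hij' : (i:ℕ) ≤ (j:ℕ) := hij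
        split_ifs with ha hb hb
        · exact le_refl _
        · exfalso; omega
        · norm_num
        · exact le_refl _
      simp only [PiLp.add_apply, cvec, PiLp.toLp_apply]
      linarith
    have := proj_var m W hW x r hr hmin (cvec m K) hmem
    rw [sumneg K hK]
    linarith
  -- fact 2 : F m = 0
  have fact2 : (∑ i ∈ Finset.range m, (Ee m r i - Ee m x i)) = 0 := by
    have hmem : r + (-1 : ℝ) • cvec m m ∈ W := by
      rw [hW]
      intro i j hij
      have h1 := hr' i j hij
      simp only [PiLp.add_apply, PiLp.smul_apply, cvec, smul_eq_mul, PiLp.toLp_apply, if_pos i.2, if_pos j.2]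
      linarith
    have h2 := proj_var m W hW x r hr hmin _ hmem
    rw [real_inner_smul_right] at h2
    have h3 : (0:ℝ) ≤ inner ℝ (x - r) (cvec m m) := by linarith
    have := sumneg m (le_refl m)
    have h4 := fact1 m (le_refl m)
    rw [this] at h4 ⊢
    linarith
  refine ⟨fact1, fact2, ?_⟩
  -- complementarity
  intro k hk1 hk2 hFk
  have hk1m : k - 1 < m := by omega
  have hEr1 : Ee m r (k-1) = r ⟨k-1, hk1m⟩ := by simp [Ee, hk1m]
  have hErk : Ee m r k = r ⟨k, hk2⟩ := by simp [Ee, hk2]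
  have hdp : 0 ≤ Ee m r (k-1) - Ee m r k := by
    rw [hEr1, hErk]
    have := hr' ⟨k-1, hk1m⟩ ⟨k, hk2⟩ (Fin.mk_le_mk.mpr (by omega))
    linarith
  set c : ℝ := -(Ee m r (k-1) - Ee m r k) with hc
  have hmem : r + c • cvec m k ∈ W := by
    rw [hW]
    intro i j hij
    have h1 := hr' i j hij
    have hij' : (i:ℕ) ≤ (j:ℕ) := hij
    simp only [PiLp.add_apply, PiLp.smul_apply, cvec, smul_eq_mul, PiLp.toLp_apply]
    by_cases hjk : (j:ℕ) < k
    · have hik : (i:ℕ) < k := by omega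
      rw [if_pos hjk, if_pos hik]
      linarith
    · rw [if_neg hjk]
      by_cases hik : (i:ℕ) < k
      · rw [if_pos hik, mul_one]
        have h5 : r j ≤ r ⟨k, hk2⟩ := hr' ⟨k, hk2⟩ j (by rw [Fin.le_def]; simpa using by omega)
        have h6 : r ⟨k-1, hk1m⟩ ≤ r i := hr' i ⟨k-1, hk1m⟩ (by rw [Fin.le_def]; simpa using by omega)
        rw [hc, hEr1, hErk]
        linarith
      · rw [if_neg hik]
        linarith
  have h2 := proj_var m W hW x r hr hmin _ hmem
  rw [real_inner_smul_right] at h2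
  have h3 := sumneg k (le_of_lt hk2)
  have h5 : (inner ℝ (x - r) (cvec m k) : ℝ)
      = -(∑ i ∈ Finset.range k, (Ee m r i - Ee m x i)) := by linarith
  rw [h5, hc] at h2
  have h7 : Ee m r (k-1) - Ee m r k ≤ 0 := by
    by_contra hh
    push_neg at hh
    nlinarith
  linarith

private lemma mem_d (m : ℕ) (W : Set (EuclideanSpace ℝ (Fin m)))
    (hW : W = {x | ∀ i j : Fin m, i ≤ j → x j ≤ x i})
    (r : EuclideanSpace ℝ (Fin m)) (hr : r ∈ W) :
    ∀ k, 1 ≤ k → k < m → 0 ≤ Ee m r (k-1) - Ee m r k := by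
  intro k hk1 hk2
  have hr' : ∀ i j : Fin m, i ≤ j → r j ≤ r i := by rw [hW] at hr; exact hr
  have hk1m : k - 1 < m := by omega
  have h := hr' ⟨k-1, hk1m⟩ ⟨k, hk2⟩ (Fin.mk_le_mk.mpr (by omega))
  simp only [Ee, dif_pos hk1m, dif_pos hk2]
  linarith

/-- The metric projection onto the monotone wedge
`W = {x : x^1 ≥ x^2 ≥ ⋯ ≥ x^m}` in `ℝ^m` is `W`-isotone: if `v - u ∈ W`,
then `P_W v - P_W u ∈ W`. -/
theorem monotone_wedge_proj_isotone (m : ℕ)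
    (W : Set (EuclideanSpace ℝ (Fin m)))
    (hW : W = {x | ∀ i j : Fin m, i ≤ j → x j ≤ x i})
    (PW : EuclideanSpace ℝ (Fin m) → EuclideanSpace ℝ (Fin m))
    (hPW : ∀ x, PW x ∈ W ∧ ∀ y ∈ W, ‖x - PW x‖ ≤ ‖x - y‖) :
    ∀ u v : EuclideanSpace ℝ (Fin m), v - u ∈ W → PW v - PW u ∈ W := by
  intro u v huv
  obtain ⟨hpW, hpmin⟩ := hPW u
  obtain ⟨hqW, hqmin⟩ := hPW v
  set p := PW u with hpdef
  set q := PW v with hqdef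
  obtain ⟨hFpos, hFm, hFcomp⟩ := proj_facts m W hW u p hpW hpmin
  obtain ⟨hGpos, hGm, hGcomp⟩ := proj_facts m W hW v q hqW hqmin
  set F : ℕ → ℝ := fun k => ∑ i ∈ Finset.range k, (Ee m p i - Ee m u i) with hF
  set G : ℕ → ℝ := fun k => ∑ i ∈ Finset.range k, (Ee m q i - Ee m v i) with hG
  set dp : ℕ → ℝ := fun k => Ee m p (k-1) - Ee m p k with hdp'
  set dq : ℕ → ℝ := fun k => Ee m q (k-1) - Ee m q k with hdq'
  set du : ℕ → ℝ := fun k => Ee m u (k-1) - Ee m u k with hdu'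
  set dv : ℕ → ℝ := fun k => Ee m v (k-1) - Ee m v k with hdv'
  have hLp : ∀ k, 1 ≤ k → k < m → dp k = du k + 2*F k - F (k-1) - F (k+1) := by
    intro k hk1 hk2
    have e1 : F (k+1) = F k + (Ee m p k - Ee m u k) := Finset.sum_range_succ _ k
    have e2 : F k = F (k-1) + (Ee m p (k-1) - Ee m u (k-1)) := by
      conv_lhs => rw [show k = (k-1)+1 by omega]
      exact Finset.sum_range_succ _ (k-1)
    simp only [hdp', hdu']
    linarith
  have hLq : ∀ k, 1 ≤ k → k < m → dq k = dv k + 2*G k - G (k-1) - G (k+1) := by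
    intro k hk1 hk2
    have e1 : G (k+1) = G k + (Ee m q k - Ee m v k) := Finset.sum_range_succ _ k
    have e2 : G k = G (k-1) + (Ee m q (k-1) - Ee m v (k-1)) := by
      conv_lhs => rw [show k = (k-1)+1 by omega]
      exact Finset.sum_range_succ _ (k-1)
    simp only [hdq', hdv']
    linarith
  have hduv : ∀ k, 1 ≤ k → k < m → du k ≤ dv k := by
    intro k hk1 hk2
    have h := mem_d m W hW (v - u) huv k hk1 hk2
    have hE : ∀ i, Ee m (v - u) i = Ee m v i - Ee m u i := by
      intro i
      by_cases hi : i < m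
      · simp [Ee, dif_pos hi]
      · simp [Ee, dif_neg hi]
    rw [hE, hE] at h
    simp only [hdu', hdv']
    linarith
  have hstep := lcp_compare m F G du dv dp dq
    (by simp [hF]) hFm (by simp [hG]) hGm hFpos hGpos hLp hLq hFcomp hGcomp
    (mem_d m W hW p hpW) (mem_d m W hW q hqW) hduv
  -- monotonicity of the difference
  have claim : ∀ b a : ℕ, a ≤ b → b < m →
      Ee m q b - Ee m p b ≤ Ee m q a - Ee m p a := by
    intro b
    induction b with
    | zero =>
      intro a ha _
      have : a = 0 := Nat.le_zero.mp ha
      subst this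
      exact le_refl _
    | succ b ih =>
      intro a ha hbm
      rcases Nat.lt_or_ge a (b+1) with h | h
      · have h1 := ih a (by omega) (by omega)
        have h2 := hstep (b+1) (by omega) hbm
        simp only [hdp', hdq', Nat.add_sub_cancel] at h2
        linarith
      · have : a = b + 1 := by omega
        subst this
        exact le_refl _
  rw [hW]
  intro i j hij
  have hc := claim j.1 i.1 hij j.isLt
  have eq1 : Ee m q (j:ℕ) = q j := by simp [Ee, j.isLt]
  have eq2 : Ee m p (j:ℕ) = p j := by simp [Ee, j.isLt]
  have eq3 : Ee m q (i:ℕ) = q i := by simp [Ee, i.isLt]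
  have eq4 : Ee m p (i:ℕ) = p i := by simp [Ee, i.isLt]
  rw [eq1, eq2, eq3, eq4] at hc
  simp only [Set.mem_setOf_eq, PiLp.sub_apply]
  linarith
end
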